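/- arXiv:1908.02693 — 5 statements merged into one kernel-verified Lean document; each statement's English description precedes it below -/
import Mathlib

section
/- Let X be a type, l a filter on X, and ε, ε̃ : X → ℝ. Assume there are constants C ≥ 1 and κ > 0 such that, eventually along l, 0 < ε(x) < 1, 0 < ε̃(x) < 1, ε̃(x) ≤ C·ε(x)^κ and ε(x) ≤ C·ε̃(x)^κ. If ε tends to 0 along l, then the ratio of double logarithms log(−log ε̃(x)) / log(−log ε(x)) tends to 1 along l. -/
/-- Let `l` be a filter on `X` and `e, e' : X → ℝ` (the splitting parameters `ε` and
`ε-tilde`). If eventually along `l` we have `0 < e < 1`, `0 < e' < 1`, and the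
two-sided Hölder-type bounds `e' ≤ C·e^κ`, `e ≤ C·e'^κ` (with `C ≥ 1`, `κ > 0`),
and `e → 0` along `l`, then the ratio of double logarithms
`log(−log e') / log(−log e)` tends to `1` along `l`. -/
theorem doubleLog_ratio_tendsto_one
    {X : Type*} (l : Filter X) (e e' : X → ℝ) (C κ : ℝ)
    (hC : 1 ≤ C) (hκ : 0 < κ)
    (hev : ∀ᶠ x in l,
      0 < e x ∧ e x < 1 ∧ 0 < e' x ∧ e' x < 1 ∧
      e' x ≤ C * e x ^ κ ∧ e x ≤ C * e' x ^ κ)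
    (he0 : Filter.Tendsto e l (nhds 0)) :
    Filter.Tendsto
      (fun x => Real.log (-Real.log (e' x)) / Real.log (-Real.log (e x)))
      l (nhds 1) := by
  set L : X → ℝ := fun x => -Real.log (e x) with hLdef
  set L' : X → ℝ := fun x => -Real.log (e' x) with hL'def
  have hlogC : (0:ℝ) ≤ Real.log C := Real.log_nonneg hC
  -- L tends to atTop
  have hL : Filter.Tendsto L l Filter.atTop := by
    have h1 : Filter.Tendsto e l (nhdsWithin 0 (Set.Ioi 0)) := by
      rw [tendsto_nhdsWithin_iff]
      exact ⟨he0, hev.mono fun x hx => hx.1⟩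
    have h2 : Filter.Tendsto (fun x => Real.log (e x)) l Filter.atBot :=
      Real.tendsto_log_nhdsGT_zero.comp h1
    exact Filter.tendsto_neg_atBot_atTop.comp h2
  have hlogL : Filter.Tendsto (fun x => Real.log (L x)) l Filter.atTop :=
    Real.tendsto_log_atTop.comp hL
  set T : ℝ := Real.exp 1 + 2 * Real.log C / κ + Real.log C with hTdef
  have hT1 : Real.exp 1 ≤ T := by
    have : 0 ≤ 2 * Real.log C / κ := by positivity
    simp only [hTdef]; linarith
  have hT2 : 2 * Real.log C / κ ≤ T := by
    have := Real.exp_pos 1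
    simp only [hTdef]; linarith
  have hT3 : Real.log C ≤ T := by
    have h1 := Real.exp_pos 1
    have : 0 ≤ 2 * Real.log C / κ := by positivity
    simp only [hTdef]; linarith
  set M : ℝ := |Real.log 2 - Real.log κ| with hMdef
  clear_value L L' T M
  -- the key eventual set
  have key : ∀ᶠ x in l,
      1 ≤ Real.log (L x) ∧
      Real.log (L' x) - Real.log (L x) ≤ M ∧
      -M ≤ Real.log (L' x) - Real.log (L x) := by
    filter_upwards [hev, hL.eventually_ge_atTop T] with x hx hTx
    obtain ⟨he, _, he', _, hb1, hb2⟩ := hx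
    have hLpos : 0 < L x := lt_of_lt_of_le (Real.exp_pos 1) (hT1.trans hTx)
    -- bounds on L'
    have hlog1 : Real.log (e' x) ≤ Real.log C + κ * Real.log (e x) := by
      have := Real.log_le_log he' hb1
      rwa [Real.log_mul (by linarith : C ≠ 0) (by positivity : e x ^ κ ≠ 0),
        Real.log_rpow he] at this
    have hlog2 : Real.log (e x) ≤ Real.log C + κ * Real.log (e' x) := by
      have := Real.log_le_log he hb2
      rwa [Real.log_mul (by linarith : C ≠ 0) (by positivity : e' x ^ κ ≠ 0),
        Real.log_rpow he'] at this
    have hlow : κ * L x - Real.log C ≤ L' x := by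
      simp only [hLdef, hL'def]; nlinarith
    have hup : κ * L' x ≤ L x + Real.log C := by
      simp only [hLdef, hL'def]; nlinarith
    -- since L x ≥ T ≥ 2 log C / κ, log C ≤ κ L x / 2
    have hCle : Real.log C ≤ κ * L x / 2 := by
      have h : 2 * Real.log C / κ ≤ L x := le_trans hT2 hTx
      have := (div_le_iff₀ hκ).mp h
      nlinarith
    have hlow2 : κ * L x / 2 ≤ L' x := by linarith
    have hup2 : L' x ≤ 2 * L x / κ := by
      have hCle2 : Real.log C ≤ L x := le_trans hT3 hTx
      rw [le_div_iff₀ hκ] at *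
      nlinarith
    have hL'pos : 0 < L' x := lt_of_lt_of_le (by positivity) hlow2
    refine ⟨?_, ?_, ?_⟩
    · calc (1:ℝ) = Real.log (Real.exp 1) := (Real.log_exp 1).symm
        _ ≤ Real.log (L x) := Real.log_le_log (Real.exp_pos 1) (le_trans hT1 hTx)
    · have h := Real.log_le_log hL'pos hup2
      rw [Real.log_div (by positivity) (ne_of_gt hκ), Real.log_mul two_ne_zero
        (ne_of_gt hLpos)] at h
      have : Real.log (L' x) - Real.log (L x) ≤ Real.log 2 - Real.log κ := by linarith
      rw [hMdef]; exact le_trans this (le_abs_self _)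
    · have h := Real.log_le_log (by positivity) hlow2
      rw [Real.log_div (by positivity) two_ne_zero, Real.log_mul (ne_of_gt hκ)
        (ne_of_gt hLpos)] at h
      have : Real.log κ - Real.log 2 ≤ Real.log (L' x) - Real.log (L x) := by linarith
      calc -M ≤ -(Real.log 2 - Real.log κ) := by
              rw [hMdef]; exact neg_le_neg (le_abs_self _)
        _ = Real.log κ - Real.log 2 := by ring
        _ ≤ _ := this
  -- squeeze: (log L' - log L)/log L → 0
  have hM0 : Filter.Tendsto (fun x => M / Real.log (L x)) l (nhds 0) :=
    Filter.Tendsto.div_atTop tendsto_const_nhds hlogL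
  have hM0' : Filter.Tendsto (fun x => -M / Real.log (L x)) l (nhds 0) :=
    Filter.Tendsto.div_atTop tendsto_const_nhds hlogL
  have hg : Filter.Tendsto
      (fun x => (Real.log (L' x) - Real.log (L x)) / Real.log (L x)) l (nhds 0) := by
    refine tendsto_of_tendsto_of_tendsto_of_le_of_le' hM0' hM0 ?_ ?_
    · filter_upwards [key] with x ⟨h1, _, h3⟩
      exact (div_le_div_iff_of_pos_right (by linarith : (0:ℝ) < Real.log (L x))).mpr h3
    · filter_upwards [key] with x ⟨h1, h2, _⟩
      exact (div_le_div_iff_of_pos_right (by linarith : (0:ℝ) < Real.log (L x))).mpr h2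
  have heq : ∀ᶠ x in l,
      1 + (Real.log (L' x) - Real.log (L x)) / Real.log (L x)
        = Real.log (L' x) / Real.log (L x) := by
    filter_upwards [key] with x ⟨h1, _, _⟩
    have hne : Real.log (L x) ≠ 0 := by linarith
    field_simp
    ring
  have h1 := hg.const_add (1:ℝ)
  rw [add_zero] at h1
  simp only [hLdef, hL'def] at h1 heq
  exact h1.congr' heq
end

section
/- Let X be a type, l a nontrivial filter on X, and ε, ε̃ : X → ℝ. Assume there are constants C ≥ 1 and κ > 0 such that, eventually along l, 0 < ε(x) < 1, 0 < ε̃(x) < 1, ε̃(x) ≤ C·ε(x)^κ and ε(x) ≤ C·ε̃(x)^κ, and that ε tends to 0 along l. Let λ, λ̃ > 1 be real numbers and suppose that log(−log ε̃(x)) / log(−log ε(x)) tends to log λ̃ / log λ along l. Then λ = λ̃. -/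
/-!
Put `t = -log ε` and `t̃ = -log ε̃`. Taking logarithms in the two Hölder bounds gives
`κ t - log C ≤ t̃` and `κ t̃ - log C ≤ t`, so `t̃ =Θ t` while `t → ∞`. Then `log (t̃ / t)` stays
bounded, which is negligible against `log t → ∞`; hence `log t̃ / log t → 1`, and uniqueness of
limits forces `log λ̃ = log λ`.
-/

open Filter Real Asymptotics Topology

namespace Real

theorem log_le_log_add_mul_log_of_le_mul_rpow {a b C κ : ℝ} (ha : 0 < a) (hb : 0 < b)
    (h : b ≤ C * a ^ κ) : log b ≤ log C + κ * log a := by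
  have hCpos : 0 < C := pos_of_mul_pos_left (hb.trans_le h) (rpow_pos_of_pos ha κ).le
  calc log b ≤ log (C * a ^ κ) := log_le_log hb h
    _ = log C + κ * log a := by
      rw [log_mul hCpos.ne' (rpow_pos_of_pos ha κ).ne', log_rpow ha]

theorem abs_log_le_abs_add_abs_inv (x : ℝ) : |log x| ≤ |x| + |x⁻¹| := by
  have hx : log x ≤ |x| := by simpa only [log_abs] using log_le_self (abs_nonneg x)
  have hx_inv : -log x ≤ |x⁻¹| := by
    simpa only [log_abs, log_inv] using log_le_self (abs_nonneg x⁻¹)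
  rw [abs_le]
  constructor <;> linarith [abs_nonneg x, abs_nonneg x⁻¹]

theorem tendsto_neg_log_atTop_of_tendsto_zero {X : Type*} {l : Filter X} {ε : X → ℝ}
    (hε : Tendsto ε l (𝓝 0)) (hpos : ∀ᶠ x in l, 0 < ε x) :
    Tendsto (fun x => -log (ε x)) l atTop :=
  tendsto_neg_atBot_atTop.comp
    (tendsto_log_nhdsGT_zero.comp (tendsto_nhdsWithin_of_tendsto_nhds_of_eventually_within _ hε hpos))

end Real

section Asymptotics

variable {X : Type*} {l : Filter X} {s t : X → ℝ}

theorem isBigO_of_tendsto_atTop_of_mul_sub_le {κ A : ℝ} (ht : Tendsto t l atTop) (hκ : 0 < κ)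
    (h : ∀ᶠ x in l, κ * t x - A ≤ s x) : t =O[l] s := by
  -- once `κ t ≥ 2A`, the hypothesis gives `κ t / 2 ≤ s`
  refine IsBigO.of_bound (2 / κ) ?_
  filter_upwards [h, ht.eventually_ge_atTop 0, ht.eventually_ge_atTop (2 * A / κ)]
    with x hx ht0 htA
  rw [div_le_iff₀ hκ] at htA
  rw [norm_of_nonneg ht0, div_mul_eq_mul_div, le_div_iff₀ hκ]
  nlinarith [le_norm_self (s x)]

theorem isTheta_of_mul_sub_le {κ A : ℝ} (ht : Tendsto t l atTop) (hκ : 0 < κ)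
    (hst : ∀ᶠ x in l, κ * t x - A ≤ s x) (hts : ∀ᶠ x in l, κ * s x - A ≤ t x) :
    s =Θ[l] t := by
  have hs : Tendsto s l atTop :=
    tendsto_atTop_mono' l hst (tendsto_atTop_add_const_right _ _ (ht.const_mul_atTop hκ))
  exact ⟨isBigO_of_tendsto_atTop_of_mul_sub_le hs hκ hts,
    isBigO_of_tendsto_atTop_of_mul_sub_le ht hκ hst⟩

theorem Asymptotics.IsTheta.log_div_isBigO_one (h : s =Θ[l] t) :
    (fun x => log (s x / t x)) =O[l] (fun _ => (1 : ℝ)) := by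
  have hst := (div_isBoundedUnder_of_isBigO h.isBigO).isBigO_one ℝ
  have hts := (div_isBoundedUnder_of_isBigO h.isBigO_symm).isBigO_one ℝ
  refine (isBigO_of_le l fun x => ?_).trans (hst.norm_left.add hts.norm_left)
  have hx := abs_log_le_abs_add_abs_inv (s x / t x)
  rw [inv_div] at hx
  simp only [norm_eq_abs]
  exact hx.trans (le_abs_self _)

theorem Asymptotics.IsTheta.log_isEquivalent (ht : Tendsto t l atTop) (h : s =Θ[l] t) :
    (fun x => log (s x)) ~[l] (fun x => log (t x)) := by
  have hlog : Tendsto (fun x => log (t x)) l atTop := tendsto_log_atTop.comp ht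
  have ht0 : ∀ᶠ x in l, t x ≠ 0 := ht.eventually_ne_atTop 0
  have hs0 : ∀ᶠ x in l, s x ≠ 0 := by
    filter_upwards [h.isBigO_symm.eq_zero_imp, ht0] with x hx htx using fun hsx => htx (hx hsx)
  have hdiff : (fun x => log (s x / t x)) =ᶠ[l] (fun x => log (s x)) - fun x => log (t x) := by
    filter_upwards [hs0, ht0] with x hsx htx using log_div hsx htx
  refine IsLittleO.isEquivalent (IsLittleO.congr' ?_ hdiff EventuallyEq.rfl)
  exact h.log_div_isBigO_one.trans_isLittleO
    ((isLittleO_one_left_iff (F := ℝ)).mpr (tendsto_norm_atTop_atTop.comp hlog))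

theorem tendsto_log_div_log_of_isTheta (ht : Tendsto t l atTop) (h : s =Θ[l] t) :
    Tendsto (fun x => log (s x) / log (t x)) l (𝓝 1) :=
  (isEquivalent_iff_tendsto_one
    ((tendsto_log_atTop.comp ht).eventually_ne_atTop 0)).mp (h.log_isEquivalent ht)

end Asymptotics

theorem charNum_eq_of_holder_general
    {X : Type*} (l : Filter X) [l.NeBot] (e e' : X → ℝ) (C κ : ℝ)
    (hκ : 0 < κ)
    (hev : ∀ᶠ x in l,
      0 < e x ∧ e x < 1 ∧ 0 < e' x ∧ e' x < 1 ∧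
      e' x ≤ C * e x ^ κ ∧ e x ≤ C * e' x ^ κ)
    (he0 : Filter.Tendsto e l (nhds 0))
    (lam lam' : ℝ) (hlam : 1 < lam) (hlam' : 1 < lam')
    (hlim : Filter.Tendsto
      (fun x => Real.log (-Real.log (e' x)) / Real.log (-Real.log (e x)))
      l (nhds (Real.log lam' / Real.log lam))) :
    lam = lam' := by
  have ht : Tendsto (fun x => -log (e x)) l atTop :=
    tendsto_neg_log_atTop_of_tendsto_zero he0 (hev.mono fun x hx => hx.1)
  have hθ : (fun x => -log (e' x)) =Θ[l] (fun x => -log (e x)) := by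
    refine isTheta_of_mul_sub_le (A := log C) ht hκ ?_ ?_
    · filter_upwards [hev] with x ⟨he, _, he', _, hbound, _⟩
      linarith [log_le_log_add_mul_log_of_le_mul_rpow he he' hbound]
    · filter_upwards [hev] with x ⟨he, _, he', _, _, hbound⟩
      linarith [log_le_log_add_mul_log_of_le_mul_rpow he' he hbound]
  have hratio : log lam' / log lam = 1 :=
    tendsto_nhds_unique hlim (tendsto_log_div_log_of_isTheta ht hθ)
  have hlog : log lam' = log lam := (div_eq_one_iff_eq (log_pos hlam).ne').mp hratio
  exact (log_injOn_pos (Set.mem_Ioi.mpr (by linarith)) (Set.mem_Ioi.mpr (by linarith)) hlog).symm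

/-- Let `l` be a nontrivial filter on `X` and `e, e' : X → ℝ` the two separatrix
splitting parameters. Assume eventually along `l` that `0 < e < 1`, `0 < e' < 1`
and the two-sided Hölder bounds `e' ≤ C·e^κ`, `e ≤ C·e'^κ` hold (`C ≥ 1`, `κ > 0`),
and that `e → 0` along `l`. If `lam, lam' > 1` and the ratio of double logarithms
`log(−log e')/log(−log e)` tends to `log lam' / log lam` along `l`,
then `lam = lam'`. -/
theorem charNum_eq_of_holder
    {X : Type*} (l : Filter X) [l.NeBot] (e e' : X → ℝ) (C κ : ℝ)
    (hC : 1 ≤ C) (hκ : 0 < κ)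
    (hev : ∀ᶠ x in l,
      0 < e x ∧ e x < 1 ∧ 0 < e' x ∧ e' x < 1 ∧
      e' x ≤ C * e x ^ κ ∧ e x ≤ C * e' x ^ κ)
    (he0 : Filter.Tendsto e l (nhds 0))
    (lam lam' : ℝ) (hlam : 1 < lam) (hlam' : 1 < lam')
    (hlim : Filter.Tendsto
      (fun x => Real.log (-Real.log (e' x)) / Real.log (-Real.log (e x)))
      l (nhds (Real.log lam' / Real.log lam))) :
    lam = lam' :=
  charNum_eq_of_holder_general l e e' C κ hκ hev he0 lam lam' hlam hlam' hlim
end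

section
/- Let F be a real normed vector space, B a neighborhood of 0 in F, and λ, λ̃ : B → ℝ functions continuous at 0 with 1 < m ≤ λ(β) ≤ M and 1 < m ≤ λ̃(β) ≤ M for all β ∈ B. Let ε_n, ε̃_n : B → ℝ (n ∈ ℕ) satisfy 0 < ε_{n+1}(β) < ε_n(β) < e^{−1} and 0 < ε̃_{n+1}(β) < ε̃_n(β) < e^{−1} for all n and β, and suppose there is K ≥ 0 with |log(−log ε_n(β)) − n·log λ(β)| ≤ K and |log(−log ε̃_n(β)) − n·log λ̃(β)| ≤ K for all n and β ∈ B. Let U be a neighborhood of 0 in ℝ × F and let h be a map on U with components h(ε, β) = (ε̃(ε, β), β̃(ε, β)) such that β̃(ε, β) ∈ B, β̃(ε, β) → 0 as (ε, β) → 0, and such that for some n₁ ∈ ℕ and a ∈ ℤ the following interleaving holds: for all (ε, β) ∈ U with β ∈ B and all n ≥ n₁ (so that n + a ≥ 0), if ε_{n+1}(β) ≤ ε < ε_n(β) then ε̃_{n+a+1}(β̃(ε, β)) ≤ ε̃(ε, β) < ε̃_{n+a}(β̃(ε, β)). Then: (i) there exist constants C > 0 and K″ ≥ 0 such that |log(−log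 ε̃(ε, β))/log λ̃(β̃(ε, β)) − log(−log ε)/log λ(β)| ≤ K″ whenever 0 < ε < C and ‖β‖ < C; (ii) log(−log ε̃(ε, β))/log(−log ε) tends to log λ̃(0)/log λ(0) as ε → 0⁺ and β → 0. -/
open Filter Real

/-- analytic content of Theorem 3.1 on the saddle-loop
bifurcation.
`B` is a neighbourhood of `0` in `F`; `lam, lamt : F → ℝ` are continuous at `0`
with `1 < m ≤ lam, lamt ≤ M` on `B`; `en, ent : ℕ → F → ℝ` are the values of the
splitting parameter at a sparkling connection with `n` turns, satisfying
`0 < en (n+1) β < en n β < exp (−1)` on `B` and the double-logarithm estimates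
`|log(−log (en n β)) − n·log (lam β)| ≤ K` (likewise for `ent`, `lamt`).
The parameter change `h (ε, β) = (et (ε, β), bt (ε, β))` on a neighbourhood `U`
of `0` sends parameters where `ε` lies between `en (n+1) β` and `en n β` to
parameters between `ent (n+a+1)` and `ent (n+a)` of the second family.
Then:
(i) the difference `log(−log et)/log (lamt ∘ bt) − log(−log ε)/log lam` is
uniformly bounded on `{0 < ε < C, ‖β‖ < C}` for some `C > 0`;
(ii) `log(−log et)/log(−log ε) → log (lamt 0)/log (lam 0)` as `ε → 0⁺, β → 0`. -/
theorem saddle_loop_doubleLog_estimates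
    {F : Type*} [NormedAddCommGroup F] [NormedSpace ℝ F]
    (B : Set F) (hB : B ∈ nhds (0 : F))
    (lam lamt : F → ℝ)
    (hlamc : ContinuousAt lam 0) (hlamtc : ContinuousAt lamt 0)
    (m M : ℝ) (hm : 1 < m)
    (hlamb : ∀ β ∈ B, m ≤ lam β ∧ lam β ≤ M)
    (hlamtb : ∀ β ∈ B, m ≤ lamt β ∧ lamt β ≤ M)
    (en ent : ℕ → F → ℝ)
    (hen : ∀ β ∈ B, ∀ n : ℕ,
      0 < en (n + 1) β ∧ en (n + 1) β < en n β ∧ en n β < Real.exp (-1))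
    (hent : ∀ β ∈ B, ∀ n : ℕ,
      0 < ent (n + 1) β ∧ ent (n + 1) β < ent n β ∧ ent n β < Real.exp (-1))
    (K : ℝ) (hK : 0 ≤ K)
    (hasymp : ∀ (n : ℕ), ∀ β ∈ B,
      |Real.log (-Real.log (en n β)) - n * Real.log (lam β)| ≤ K)
    (hasympt : ∀ (n : ℕ), ∀ β ∈ B,
      |Real.log (-Real.log (ent n β)) - n * Real.log (lamt β)| ≤ K)
    (U : Set (ℝ × F)) (hU : U ∈ nhds (0 : ℝ × F))
    (et : ℝ × F → ℝ) (bt : ℝ × F → F)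
    (hbtB : ∀ p ∈ U, bt p ∈ B)
    (hbt0 : Filter.Tendsto bt (nhds (0 : ℝ × F)) (nhds (0 : F)))
    (n₁ : ℕ) (a : ℤ) (hn₁a : 0 ≤ (n₁ : ℤ) + a)
    (hinter : ∀ p ∈ U, p.2 ∈ B → ∀ n : ℕ, n₁ ≤ n →
      (en (n + 1) p.2 ≤ p.1 ∧ p.1 < en n p.2) →
      (ent ((n : ℤ) + a + 1).toNat (bt p) ≤ et p ∧
        et p < ent ((n : ℤ) + a).toNat (bt p))) :
    (∃ C > (0 : ℝ), ∃ K'' : ℝ, 0 ≤ K'' ∧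
      ∀ (ε : ℝ) (β : F), 0 < ε → ε < C → ‖β‖ < C →
        |Real.log (-Real.log (et (ε, β))) / Real.log (lamt (bt (ε, β))) -
          Real.log (-Real.log ε) / Real.log (lam β)| ≤ K'') ∧
    Filter.Tendsto
      (fun p : ℝ × F => Real.log (-Real.log (et p)) / Real.log (-Real.log p.1))
      (nhdsWithin (0 : ℝ × F) {p : ℝ × F | 0 < p.1})
      (nhds (Real.log (lamt 0) / Real.log (lam 0))) := by
  classical
  have h0B : (0:F) ∈ B := mem_of_mem_nhds hB
  have hm0 : (0:ℝ) < m := lt_trans one_pos hm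
  have hmM : m ≤ M := le_trans (hlamb 0 h0B).1 (hlamb 0 h0B).2
  have hM1 : 1 < M := lt_of_lt_of_le hm hmM
  have hlogm : 0 < Real.log m := Real.log_pos hm
  have hlogM : 0 < Real.log M := Real.log_pos hM1
  set K' : ℝ := K + Real.log M with hK'def
  have hK' : 0 < K' := add_pos_of_nonneg_of_pos hK hlogM
  have hlogb : ∀ l : F → ℝ, (∀ β ∈ B, m ≤ l β ∧ l β ≤ M) → ∀ β ∈ B,
      Real.log m ≤ Real.log (l β) ∧ Real.log (l β) ≤ Real.log M := by
    intro l hl β hβ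
    exact ⟨Real.log_le_log hm0 (hl β hβ).1,
      Real.log_le_log (lt_of_lt_of_le hm0 (hl β hβ).1) (hl β hβ).2⟩
  -- generic interval bound
  have bnd : ∀ (e : ℕ → F → ℝ) (l : F → ℝ),
      (∀ β ∈ B, ∀ n : ℕ, 0 < e (n+1) β ∧ e (n+1) β < e n β ∧ e n β < Real.exp (-1)) →
      (∀ n : ℕ, ∀ β ∈ B, |Real.log (-Real.log (e n β)) - n * Real.log (l β)| ≤ K) →
      (∀ β ∈ B, m ≤ l β ∧ l β ≤ M) →
      ∀ β ∈ B, ∀ n : ℕ, ∀ x : ℝ, e (n+1) β ≤ x → x < e n β →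
        |Real.log (-Real.log x) - n * Real.log (l β)| ≤ K' := by
    intro e l he hasy hl β hβ n x hx1 hx2
    obtain ⟨hp, hlt, hub⟩ := he β hβ n
    have hx0 : 0 < x := lt_of_lt_of_le hp hx1
    have he0 : 0 < e n β := lt_trans hp hlt
    have hlx : 1 < -Real.log (e n β) := by
      have h := Real.log_lt_log he0 hub
      rw [Real.log_exp] at h; linarith
    have h1 : -Real.log (e n β) < -Real.log x := by
      have := Real.log_lt_log hx0 hx2; linarith
    have h2 : -Real.log x ≤ -Real.log (e (n+1) β) := by
      have := Real.log_le_log hp hx1; linarith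
    have hL := hlogb l hl β hβ
    have hA1 : Real.log (-Real.log (e n β)) ≤ Real.log (-Real.log x) :=
      Real.log_le_log (by linarith) (le_of_lt h1)
    have hA2 : Real.log (-Real.log x) ≤ Real.log (-Real.log (e (n+1) β)) :=
      Real.log_le_log (by linarith) h2
    have hb1 := abs_le.mp (hasy n β hβ)
    have hb2 := abs_le.mp (hasy (n+1) β hβ)
    push_cast at hb2
    rw [abs_le]
    constructor
    · have := hb1.1
      simp only [hK'def]
      linarith
    · have := hb2.2
      simp only [hK'def]
      nlinarith [hL.2]
  -- lower bound at n₁, uniform in β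
  set c₀ : ℝ := Real.exp (-(Real.exp ((n₁:ℝ) * Real.log M + K))) with hc₀def
  have hc₀pos : 0 < c₀ := Real.exp_pos _
  have hc₀ : ∀ β ∈ B, c₀ ≤ en n₁ β := by
    intro β hβ
    obtain ⟨hp, hlt, hub⟩ := hen β hβ n₁
    have he0 : 0 < en n₁ β := lt_trans hp hlt
    have hb := abs_le.mp (hasymp n₁ β hβ)
    have hL := hlogb lam hlamb β hβ
    have hlx : 1 < -Real.log (en n₁ β) := by
      have h := Real.log_lt_log he0 hub
      rw [Real.log_exp] at h; linarith
    have h1 : Real.log (-Real.log (en n₁ β)) ≤ (n₁:ℝ) * Real.log M + K := by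
      have hmul : (n₁:ℝ) * Real.log (lam β) ≤ (n₁:ℝ) * Real.log M :=
        mul_le_mul_of_nonneg_left hL.2 (Nat.cast_nonneg _)
      linarith [hb.2]
    have h2 : -Real.log (en n₁ β) ≤ Real.exp ((n₁:ℝ) * Real.log M + K) := by
      have h := Real.exp_le_exp.mpr h1
      rwa [Real.exp_log (by linarith)] at h
    calc c₀ = Real.exp (-(Real.exp ((n₁:ℝ) * Real.log M + K))) := hc₀def
      _ ≤ Real.exp (Real.log (en n₁ β)) := Real.exp_le_exp.mpr (by linarith)
      _ = en n₁ β := Real.exp_log he0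
  have hanti : ∀ β ∈ B, StrictAnti fun n => en n β :=
    fun β hβ => strictAnti_nat_of_succ_lt fun n => (hen β hβ n).2.1
  -- existence of interval index
  have hex : ∀ β ∈ B, ∀ ε : ℝ, 0 < ε → ε < en n₁ β →
      ∃ n : ℕ, n₁ ≤ n ∧ en (n+1) β ≤ ε ∧ ε < en n β := by
    intro β hβ ε hε0 hεlt
    have hε1 : ε < 1 := by
      have h1 : en n₁ β < Real.exp (-1) := (hen β hβ n₁).2.2
      have h2 : Real.exp (-1) < 1 := Real.exp_lt_one_iff.mpr (by norm_num)
      linarith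
    have hlε : 0 < -Real.log ε := by have := Real.log_neg hε0 hε1; linarith
    obtain ⟨N, hN⟩ := exists_nat_gt ((K + Real.log (-Real.log ε)) / Real.log m)
    have hPN : en N β ≤ ε := by
      have hb := abs_le.mp (hasymp N β hβ)
      have hL := hlogb lam hlamb β hβ
      obtain ⟨hp, hlt, hub⟩ := hen β hβ N
      have he0 : 0 < en N β := lt_trans hp hlt
      have hlx : 1 < -Real.log (en N β) := by
        have h := Real.log_lt_log he0 hub
        rw [Real.log_exp] at h; linarith
      have h1 : (N:ℝ) * Real.log m - K ≤ Real.log (-Real.log (en N β)) := by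
        have hmul : (N:ℝ) * Real.log m ≤ (N:ℝ) * Real.log (lam β) :=
          mul_le_mul_of_nonneg_left hL.1 (Nat.cast_nonneg _)
        linarith [hb.1]
      have h2 : Real.log (-Real.log ε) < (N:ℝ) * Real.log m - K := by
        rw [div_lt_iff₀ hlogm] at hN; linarith
      have h3 : Real.log (-Real.log ε) < Real.log (-Real.log (en N β)) := lt_of_lt_of_le h2 h1
      have h4 : -Real.log ε < -Real.log (en N β) := by
        have h := Real.exp_lt_exp.mpr h3
        rwa [Real.exp_log hlε, Real.exp_log (by linarith)] at h
      have h5 : Real.log (en N β) < Real.log ε := by linarith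
      have h := Real.exp_lt_exp.mpr h5
      rw [Real.exp_log he0, Real.exp_log hε0] at h
      exact le_of_lt h
    have hne : ∃ k : ℕ, en k β ≤ ε := ⟨N, hPN⟩
    have hfind : en (Nat.find hne) β ≤ ε := Nat.find_spec hne
    have hn'gt : n₁ < Nat.find hne := by
      by_contra h
      push_neg at h
      have := (hanti β hβ).antitone h
      linarith
    refine ⟨Nat.find hne - 1, by omega, ?_, ?_⟩
    · have hh : Nat.find hne - 1 + 1 = Nat.find hne := by omega
      rw [hh]; exact hfind
    · exact lt_of_not_ge (Nat.find_min hne (by omega))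
  -- choose C
  obtain ⟨δ₁, hδ₁pos, hδ₁⟩ := Metric.mem_nhds_iff.mp hB
  obtain ⟨δ₂, hδ₂pos, hδ₂⟩ := Metric.mem_nhds_iff.mp hU
  set C : ℝ := min (min δ₁ δ₂) c₀ with hCdef
  have hCpos : 0 < C := lt_min (lt_min hδ₁pos hδ₂pos) hc₀pos
  have hCδ₁ : C ≤ δ₁ := le_trans (min_le_left _ _) (min_le_left _ _)
  have hCδ₂ : C ≤ δ₂ := le_trans (min_le_left _ _) (min_le_right _ _)
  have hCc₀ : C ≤ c₀ := min_le_right _ _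
  have hmem : ∀ p : ℝ × F, 0 < p.1 → p.1 < C → ‖p.2‖ < C → p.2 ∈ B ∧ p ∈ U := by
    intro p h0 h1 h2
    constructor
    · apply hδ₁
      rw [Metric.mem_ball, dist_zero_right]
      exact lt_of_lt_of_le h2 hCδ₁
    · apply hδ₂
      rw [Metric.mem_ball, dist_zero_right, Prod.norm_def]
      apply max_lt
      · rw [Real.norm_eq_abs, abs_of_pos h0]; exact lt_of_lt_of_le h1 hCδ₂
      · exact lt_of_lt_of_le h2 hCδ₂
  -- the key estimate
  have key : ∀ p : ℝ × F, 0 < p.1 → p.1 < C → ‖p.2‖ < C →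
      p.2 ∈ B ∧ bt p ∈ B ∧ 0 < Real.log (-Real.log p.1) ∧
      ∃ n : ℕ, n₁ ≤ n ∧
        |Real.log (-Real.log p.1) - n * Real.log (lam p.2)| ≤ K' ∧
        |Real.log (-Real.log (et p)) - ((n:ℝ) + (a:ℝ)) * Real.log (lamt (bt p))| ≤ K' := by
    intro p h0 h1 h2
    obtain ⟨hβB, hpU⟩ := hmem p h0 h1 h2
    have hεlt : p.1 < en n₁ p.2 := lt_of_lt_of_le (lt_of_lt_of_le h1 hCc₀) (hc₀ _ hβB)
    obtain ⟨n, hn, hx1, hx2⟩ := hex p.2 hβB p.1 h0 hεlt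
    have hbtB' := hbtB p hpU
    have hb1 := bnd en lam hen hasymp hlamb p.2 hβB n p.1 hx1 hx2
    have h0log : 0 < Real.log (-Real.log p.1) := by
      obtain ⟨hp', hlt', hub'⟩ := hen p.2 hβB n
      have he0 : 0 < en n p.2 := lt_trans hp' hlt'
      have hh : Real.log (en n p.2) < -1 := by
        have h := Real.log_lt_log he0 hub'
        rwa [Real.log_exp] at h
      have hx0 : Real.log p.1 < -1 := lt_trans (Real.log_lt_log h0 hx2) hh
      exact Real.log_pos (by linarith)
    have hZ : (0:ℤ) ≤ (n:ℤ) + a := by omega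
    obtain ⟨hi1, hi2⟩ := hinter p hpU hβB n hn ⟨hx1, hx2⟩
    have hnnz : ((((n:ℤ) + a).toNat : ℤ)) = (n:ℤ) + a := Int.toNat_of_nonneg hZ
    have hsucc : ((n:ℤ) + a + 1).toNat = ((n:ℤ) + a).toNat + 1 := by omega
    rw [hsucc] at hi1
    have hb2 := bnd ent lamt hent hasympt hlamtb (bt p) hbtB' (((n:ℤ) + a).toNat) (et p) hi1 hi2
    refine ⟨hβB, hbtB', h0log, n, hn, hb1, ?_⟩
    have hcast : (((((n:ℤ) + a).toNat) : ℝ)) = (n:ℝ) + (a:ℝ) := by exact_mod_cast hnnz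
    rwa [hcast] at hb2
  have div_bound : ∀ (X L t : ℝ), Real.log m ≤ L → |X - t * L| ≤ K' →
      |X / L - t| ≤ K' / Real.log m := by
    intro X L t hLm hb
    have hLpos : 0 < L := lt_of_lt_of_le hlogm hLm
    have hh : X / L - t = (X - t * L) / L := by field_simp
    rw [hh, abs_div, abs_of_pos hLpos]
    exact div_le_div₀ hK'.le hb hlogm hLm
  constructor
  · -- part (i)
    refine ⟨C, hCpos, 2 * (K' / Real.log m) + |(a:ℝ)|, by positivity, ?_⟩
    intro ε β h0 h1 h2
    obtain ⟨hβB, hbtB', h0log, n, hn, hb1, hb2⟩ := key (ε, β) h0 h1 h2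
    have hL := hlogb lam hlamb β hβB
    have hLt := hlogb lamt hlamtb _ hbtB'
    have e1 := div_bound _ _ _ hL.1 hb1
    have e2 := div_bound _ _ _ hLt.1 hb2
    calc |Real.log (-Real.log (et (ε, β))) / Real.log (lamt (bt (ε, β))) -
          Real.log (-Real.log ε) / Real.log (lam β)|
        ≤ |Real.log (-Real.log (et (ε, β))) / Real.log (lamt (bt (ε, β))) - ((n:ℝ) + (a:ℝ))| +
          |((n:ℝ) + (a:ℝ)) - Real.log (-Real.log ε) / Real.log (lam β)| := abs_sub_le _ _ _
      _ ≤ K' / Real.log m + (|((n:ℝ) + (a:ℝ)) - (n:ℝ)| +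
          |(n:ℝ) - Real.log (-Real.log ε) / Real.log (lam β)|) :=
            add_le_add e2 (abs_sub_le _ _ _)
      _ ≤ K' / Real.log m + (|(a:ℝ)| + K' / Real.log m) := by
          refine add_le_add_right (add_le_add (le_of_eq (congrArg abs (add_sub_cancel_left (n:ℝ) (a:ℝ)))) ?_) _
          rw [abs_sub_comm]; exact e1
      _ = 2 * (K' / Real.log m) + |(a:ℝ)| := by ring
  · -- part (ii)
    set S : Set (ℝ × F) := {p : ℝ × F | 0 < p.1} with hSdef
    set C₁ : ℝ := 2 * (K' * Real.log M) + |(a:ℝ)| * (Real.log M * Real.log M) with hC₁def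
    have hC₁nonneg : 0 ≤ C₁ := by positivity
    set g : ℝ × F → ℝ := fun p => Real.log (lamt (bt p)) / Real.log (lam p.2) with hgdef
    have hgt : Tendsto g (nhds 0) (nhds (Real.log (lamt 0) / Real.log (lam 0))) := by
      have hl0 : 0 < lamt 0 := lt_of_lt_of_le hm0 (hlamtb 0 h0B).1
      have hl0' : 0 < lam 0 := lt_of_lt_of_le hm0 (hlamb 0 h0B).1
      have h1 : Tendsto (fun p : ℝ × F => Real.log (lamt (bt p))) (nhds 0)
          (nhds (Real.log (lamt 0))) :=
        Filter.Tendsto.comp (Real.continuousAt_log (ne_of_gt hl0))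
          (Filter.Tendsto.comp hlamtc hbt0)
      have hsnd : Tendsto (fun p : ℝ × F => p.2) (nhds 0) (nhds (0:F)) :=
        continuous_snd.tendsto (0 : ℝ × F)
      have h2 : Tendsto (fun p : ℝ × F => Real.log (lam p.2)) (nhds 0)
          (nhds (Real.log (lam 0))) :=
        Filter.Tendsto.comp (Real.continuousAt_log (ne_of_gt hl0'))
          (Filter.Tendsto.comp hlamc hsnd)
      exact h1.div h2 (ne_of_gt (Real.log_pos (lt_of_lt_of_le hm (hlamb 0 h0B).1)))
    have hAt : Tendsto (fun p : ℝ × F => Real.log (-Real.log p.1))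
        (nhdsWithin 0 S) atTop := by
      have h1 : Tendsto (fun p : ℝ × F => p.1) (nhdsWithin 0 S) (nhdsWithin 0 (Set.Ioi 0)) := by
        rw [tendsto_nhdsWithin_iff]
        constructor
        · exact (continuous_fst.tendsto (0 : ℝ × F)).mono_left nhdsWithin_le_nhds
        · filter_upwards [self_mem_nhdsWithin] with p hp
          exact hp
      have h2 : Tendsto (fun x : ℝ => -Real.log x) (nhdsWithin 0 (Set.Ioi 0)) atTop :=
        tendsto_neg_atBot_atTop.comp Real.tendsto_log_nhdsGT_zero
      exact Real.tendsto_log_atTop.comp (h2.comp h1)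
    have hbound : Tendsto (fun p : ℝ × F => C₁ / (Real.log m * Real.log (-Real.log p.1)))
        (nhdsWithin 0 S) (nhds 0) :=
      tendsto_const_nhds.div_atTop (hAt.const_mul_atTop hlogm)
    have hev : ∀ᶠ p in nhdsWithin (0 : ℝ × F) S,
        ‖Real.log (-Real.log (et p)) / Real.log (-Real.log p.1) - g p‖ ≤
          C₁ / (Real.log m * Real.log (-Real.log p.1)) := by
      have hball : {p : ℝ × F | ‖p‖ < C} ∈ nhds (0 : ℝ × F) := by
        have := Metric.ball_mem_nhds (0 : ℝ × F) hCpos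
        simpa [Metric.ball, dist_zero_right] using this
      filter_upwards [mem_nhdsWithin_of_mem_nhds hball, self_mem_nhdsWithin] with p hp hpS
      have h0 : 0 < p.1 := hpS
      have h1 : p.1 < C := by
        have := norm_fst_le p
        rw [Real.norm_eq_abs, abs_of_pos h0] at this
        exact lt_of_le_of_lt this hp
      have h2 : ‖p.2‖ < C := lt_of_le_of_lt (norm_snd_le p) hp
      obtain ⟨hβB, hbtB', h0log, n, hn, hb1, hb2⟩ := key p h0 h1 h2
      have hL := hlogb lam hlamb _ hβB
      have hLt := hlogb lamt hlamtb _ hbtB'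
      set A := Real.log (-Real.log p.1) with hA
      set At := Real.log (-Real.log (et p)) with hAt'
      set L := Real.log (lam p.2) with hL'
      set Lt := Real.log (lamt (bt p)) with hLt'
      have hLpos : 0 < L := lt_of_lt_of_le hlogm hL.1
      have hLtpos : 0 < Lt := lt_of_lt_of_le hlogm hLt.1
      have hid : At / A - Lt / L =
          ((At - ((n:ℝ) + (a:ℝ)) * Lt) * L + Lt * ((n:ℝ) * L - A) + (a:ℝ) * (Lt * L)) /
            (A * L) := by
        field_simp
        ring
      have t1 : |(At - ((n:ℝ) + (a:ℝ)) * Lt) * L| ≤ K' * Real.log M := by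
        rw [abs_mul]
        have hLle : |L| ≤ Real.log M := by rw [abs_of_pos hLpos]; exact hL.2
        exact mul_le_mul hb2 hLle (abs_nonneg _) hK'.le
      have t2 : |Lt * ((n:ℝ) * L - A)| ≤ Real.log M * K' := by
        rw [abs_mul]
        have hLtle : |Lt| ≤ Real.log M := by rw [abs_of_pos hLtpos]; exact hLt.2
        have hb1' : |(n:ℝ) * L - A| ≤ K' := by rw [abs_sub_comm]; exact hb1
        exact mul_le_mul hLtle hb1' (abs_nonneg _) hlogM.le
      have t3 : |(a:ℝ) * (Lt * L)| ≤ |(a:ℝ)| * (Real.log M * Real.log M) := by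
        rw [abs_mul, abs_mul]
        refine mul_le_mul_of_nonneg_left ?_ (abs_nonneg _)
        have hLle : |L| ≤ Real.log M := by rw [abs_of_pos hLpos]; exact hL.2
        have hLtle : |Lt| ≤ Real.log M := by rw [abs_of_pos hLtpos]; exact hLt.2
        exact mul_le_mul hLtle hLle (abs_nonneg _) hlogM.le
      have hnum : |(At - ((n:ℝ) + (a:ℝ)) * Lt) * L + Lt * ((n:ℝ) * L - A) + (a:ℝ) * (Lt * L)|
          ≤ C₁ := by
        calc |(At - ((n:ℝ) + (a:ℝ)) * Lt) * L + Lt * ((n:ℝ) * L - A) + (a:ℝ) * (Lt * L)|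
            ≤ |(At - ((n:ℝ) + (a:ℝ)) * Lt) * L + Lt * ((n:ℝ) * L - A)| + |(a:ℝ) * (Lt * L)| :=
              abs_add_le _ _
          _ ≤ |(At - ((n:ℝ) + (a:ℝ)) * Lt) * L| + |Lt * ((n:ℝ) * L - A)| + |(a:ℝ) * (Lt * L)| :=
              add_le_add_left (abs_add_le _ _) _
          _ ≤ K' * Real.log M + Real.log M * K' + |(a:ℝ)| * (Real.log M * Real.log M) :=
              add_le_add (add_le_add t1 t2) t3
          _ = C₁ := by rw [hC₁def]; ring
      rw [Real.norm_eq_abs]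
      show |At / A - Lt / L| ≤ C₁ / (Real.log m * A)
      rw [hid, abs_div, abs_of_pos (mul_pos h0log hLpos)]
      refine div_le_div₀ hC₁nonneg hnum (mul_pos hlogm h0log) ?_
      rw [mul_comm]
      exact mul_le_mul_of_nonneg_left hL.1 h0log.le
    have h1 : Tendsto
        (fun p : ℝ × F => Real.log (-Real.log (et p)) / Real.log (-Real.log p.1) - g p)
        (nhdsWithin 0 S) (nhds 0) := squeeze_zero_norm' hev hbound
    have h2 := h1.add (hgt.mono_left nhdsWithin_le_nhds)
    simpa using h2
end

section
/- Let F be a real normed vector space, let B and B̃ be connected open neighborhoods of 0 in F, and let c, c̃ > 0. Set U = {(ε, β) ∈ ℝ × F : β ∈ B, |ε| < c} and Ũ = {(ε, β) ∈ ℝ × F : β ∈ B̃, |ε| < c̃}. Let ε_n : B → (0, c) and ε̃_n : B̃ → (0, c̃) (n ∈ ℕ) be continuous functions with ε_{n+1}(β) < ε_n(β) for all β ∈ B, inf_{β ∈ B} ε_n(β) > 0 for each n, sup_{β ∈ B} ε_n(β) → 0 as n → ∞, and the analogous properties for ε̃_n on B̃. Put G_n = {(ε_n(β), β) : β ∈ B},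 G̃_n = {(ε̃_n(β), β) : β ∈ B̃}, C = ⋃_{n ∈ ℕ} G_n and C̃ = ⋃_{n ∈ ℕ} G̃_n. Let h : U → Ũ be a homeomorphism with h(0) = 0, h(C) = C̃, and h(U ∩ {(ε, β) : ε > 0}) = Ũ ∩ {(ε, β) : ε > 0}. Then there exist a ∈ ℤ and n₁ ∈ ℕ with n₁ + a ≥ 0 such that h(G_n) = G̃_{n+a} for all n ≥ n₁. -/
open Set


lemma preconn_subset_of_cover {X : Type*} [TopologicalSpace X] {s : Set X}
    (hs : IsPreconnected s) (hne : s.Nonempty) {V : ℕ → Set X}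
    (hV : ∀ i, IsOpen (V i)) (hcov : s ⊆ ⋃ i, V i)
    (hdisj : ∀ i j, i ≠ j → s ∩ (V i ∩ V j) = ∅) : ∃ i, s ⊆ V i := by
  obtain ⟨x, hx⟩ := hne
  obtain ⟨i, hxi⟩ := mem_iUnion.1 (hcov hx)
  refine ⟨i, fun y hy => ?_⟩
  by_contra hyi
  obtain ⟨j, hyj⟩ := mem_iUnion.1 (hcov hy)
  have hji : j ≠ i := fun e => hyi (e ▸ hyj)
  have := hs (V i) (⋃ j ∈ {j | j ≠ i}, V j) (hV i)
    (isOpen_biUnion fun j _ => hV j)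
    (fun z hz => by
      obtain ⟨k, hk⟩ := mem_iUnion.1 (hcov hz)
      rcases eq_or_ne k i with rfl | hne'
      · exact Or.inl hk
      · exact Or.inr (mem_biUnion hne' hk))
    ⟨x, hx, hxi⟩ ⟨y, hy, mem_biUnion hji hyj⟩
  obtain ⟨z, hzs, hzi, hzj⟩ := this
  obtain ⟨k, hki, hzk⟩ := by simpa using hzj
  exact (eq_empty_iff_forall_notMem.1 (hdisj i k (Ne.symm hki)) z) ⟨hzs, hzi, hzk⟩

lemma isOpen_lt_graph {F : Type*} [NormedAddCommGroup F] {B : Set F} (hBo : IsOpen B)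
    {u : F → ℝ} (hu : ContinuousOn u B) :
    IsOpen {p : ℝ × F | p.2 ∈ B ∧ p.1 < u p.2} := by
  have hS : IsOpen {p : ℝ × F | p.2 ∈ B} := hBo.preimage continuous_snd
  have hcont : ContinuousOn (fun p : ℝ × F => u p.2 - p.1) {p : ℝ × F | p.2 ∈ B} :=
    ((hu.comp continuousOn_snd (fun p hp => hp)).sub continuousOn_fst)
  have heq : {p : ℝ × F | p.2 ∈ B ∧ p.1 < u p.2} =
      {p : ℝ × F | p.2 ∈ B} ∩ (fun p : ℝ × F => u p.2 - p.1) ⁻¹' Ioi 0 := by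
    ext p; simp [mem_setOf_eq, sub_pos]
  rw [heq]
  exact hcont.isOpen_inter_preimage hS isOpen_Ioi

lemma isOpen_gt_graph {F : Type*} [NormedAddCommGroup F] {B : Set F} (hBo : IsOpen B)
    {u : F → ℝ} (hu : ContinuousOn u B) :
    IsOpen {p : ℝ × F | p.2 ∈ B ∧ u p.2 < p.1} := by
  have hS : IsOpen {p : ℝ × F | p.2 ∈ B} := hBo.preimage continuous_snd
  have hcont : ContinuousOn (fun p : ℝ × F => p.1 - u p.2) {p : ℝ × F | p.2 ∈ B} :=
    (continuousOn_fst.sub (hu.comp continuousOn_snd (fun p hp => hp)))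
  have heq : {p : ℝ × F | p.2 ∈ B ∧ u p.2 < p.1} =
      {p : ℝ × F | p.2 ∈ B} ∩ (fun p : ℝ × F => p.1 - u p.2) ⁻¹' Ioi 0 := by
    ext p; simp [mem_setOf_eq, sub_pos]
  rw [heq]
  exact hcont.isOpen_inter_preimage hS isOpen_Ioi

lemma isOpen_between_graphs {F : Type*} [NormedAddCommGroup F] {B : Set F} (hBo : IsOpen B)
    {u v : F → ℝ} (hu : ContinuousOn u B) (hv : ContinuousOn v B) :
    IsOpen {p : ℝ × F | p.2 ∈ B ∧ u p.2 < p.1 ∧ p.1 < v p.2} := by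
  have := (isOpen_gt_graph hBo hu).inter (isOpen_lt_graph hBo hv)
  convert this using 1
  ext p; simp only [mem_setOf_eq, mem_inter_iff]; tauto

lemma closure_between_subset {F : Type*} [NormedAddCommGroup F] {B : Set F} (hBo : IsOpen B)
    {u v : F → ℝ} (hu : ContinuousOn u B) (hv : ContinuousOn v B) :
    closure {p : ℝ × F | p.2 ∈ B ∧ u p.2 < p.1 ∧ p.1 < v p.2} ⊆
      {p : ℝ × F | p.2 ∈ B → (u p.2 ≤ p.1 ∧ p.1 ≤ v p.2)} := by
  apply closure_minimal
  · intro p hp _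
    exact ⟨hp.2.1.le, hp.2.2.le⟩
  · rw [← isOpen_compl_iff]
    have : {p : ℝ × F | p.2 ∈ B → (u p.2 ≤ p.1 ∧ p.1 ≤ v p.2)}ᶜ =
        {p : ℝ × F | p.2 ∈ B ∧ p.1 < u p.2} ∪ {p : ℝ × F | p.2 ∈ B ∧ v p.2 < p.1} := by
      ext p
      simp only [mem_compl_iff, mem_setOf_eq, mem_union, not_forall, not_and_or, not_le]
      constructor
      · rintro ⟨hB, hor⟩; rcases hor with h1 | h2
        · exact Or.inl ⟨hB, h1⟩
        · exact Or.inr ⟨hB, h2⟩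
      · rintro (⟨hB, h1⟩ | ⟨hB, h2⟩)
        · exact ⟨hB, Or.inl h1⟩
        · exact ⟨hB, Or.inr h2⟩
    rw [this]
    exact (isOpen_lt_graph hBo hu).union (isOpen_gt_graph hBo hv)

lemma graph_preconnected {F : Type*} [NormedAddCommGroup F] [NormedSpace ℝ F] {B : Set F}
    (hB : IsPreconnected B) {w : F → ℝ} (hw : ContinuousOn w B) :
    IsPreconnected {p : ℝ × F | p.2 ∈ B ∧ p.1 = w p.2} := by
  have : {p : ℝ × F | p.2 ∈ B ∧ p.1 = w p.2} = (fun β => (w β, β)) '' B := by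
    ext p
    constructor
    · rintro ⟨hB', he⟩
      exact ⟨p.2, hB', by dsimp only; rw [← he]⟩
    · rintro ⟨β, hβ, rfl⟩; exact ⟨hβ, rfl⟩
  rw [this]
  exact hB.image _ (hw.prodMk continuousOn_id)

lemma region_preconnected {F : Type*} [NormedAddCommGroup F] [NormedSpace ℝ F] {B : Set F}
    (hB : IsPreconnected B) {u v : F → ℝ} (hu : ContinuousOn u B) (hv : ContinuousOn v B)
    (huv : ∀ β ∈ B, u β < v β) :
    IsPreconnected {p : ℝ × F | p.2 ∈ B ∧ u p.2 < p.1 ∧ p.1 < v p.2} := by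
  have himg : {p : ℝ × F | p.2 ∈ B ∧ u p.2 < p.1 ∧ p.1 < v p.2} =
      (fun q : ℝ × F => (u q.2 + q.1 * (v q.2 - u q.2), q.2)) '' (Ioo (0:ℝ) 1 ×ˢ B) := by
    ext p
    constructor
    · rintro ⟨hB', h1, h2⟩
      have hd : 0 < v p.2 - u p.2 := sub_pos.2 (huv _ hB')
      refine ⟨((p.1 - u p.2) / (v p.2 - u p.2), p.2), ⟨⟨div_pos (by linarith) hd,
        (div_lt_one hd).2 (by linarith)⟩, hB'⟩, ?_⟩
      dsimp only
      rw [Prod.ext_iff]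
      refine ⟨?_, rfl⟩
      dsimp only
      rw [div_mul_cancel₀ _ hd.ne']
      ring
    · rintro ⟨⟨t, β⟩, ⟨⟨ht0, ht1⟩, hβ⟩, rfl⟩
      have hd : 0 < v β - u β := sub_pos.2 (huv _ hβ)
      simp only [mem_setOf_eq] at ht0 ht1 ⊢
      refine ⟨hβ, ?_, ?_⟩ <;> dsimp only at * <;> nlinarith
  rw [himg]
  refine (isPreconnected_Ioo.prod hB).image _ ?_
  apply ContinuousOn.prodMk
  · apply ContinuousOn.add
    · exact hu.comp continuousOn_snd (fun q hq => hq.2)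
    · exact continuousOn_fst.mul
        ((hv.comp continuousOn_snd (fun q hq => hq.2)).sub
          (hu.comp continuousOn_snd (fun q hq => hq.2)))
  · exact continuousOn_snd

lemma graph_mem_closure_upper {F : Type*} [NormedAddCommGroup F] [NormedSpace ℝ F] {B : Set F}
    {u v : F → ℝ} {β : F} (hβ : β ∈ B) (hlt : u β < v β) :
    (v β, β) ∈ closure {p : ℝ × F | p.2 ∈ B ∧ u p.2 < p.1 ∧ p.1 < v p.2} := by
  have hj : Continuous (fun t : ℝ => ((t, β) : ℝ × F)) := by continuity
  have h1 : (fun t : ℝ => ((t, β) : ℝ × F)) '' Ioo (u β) (v β) ⊆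
      {p : ℝ × F | p.2 ∈ B ∧ u p.2 < p.1 ∧ p.1 < v p.2} := by
    rintro p ⟨t, ⟨ht1, ht2⟩, rfl⟩; exact ⟨hβ, ht1, ht2⟩
  have h2 : (v β, β) ∈ (fun t : ℝ => ((t, β) : ℝ × F)) '' closure (Ioo (u β) (v β)) := by
    refine ⟨v β, ?_, rfl⟩
    rw [closure_Ioo hlt.ne]
    exact ⟨hlt.le, le_refl _⟩
  exact closure_mono h1 (image_closure_subset_closure_image hj h2)

lemma graph_mem_closure_lower {F : Type*} [NormedAddCommGroup F] [NormedSpace ℝ F] {B : Set F}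
    {u v : F → ℝ} {β : F} (hβ : β ∈ B) (hlt : u β < v β) :
    (u β, β) ∈ closure {p : ℝ × F | p.2 ∈ B ∧ u p.2 < p.1 ∧ p.1 < v p.2} := by
  have hj : Continuous (fun t : ℝ => ((t, β) : ℝ × F)) := by continuity
  have h1 : (fun t : ℝ => ((t, β) : ℝ × F)) '' Ioo (u β) (v β) ⊆
      {p : ℝ × F | p.2 ∈ B ∧ u p.2 < p.1 ∧ p.1 < v p.2} := by
    rintro p ⟨t, ⟨ht1, ht2⟩, rfl⟩; exact ⟨hβ, ht1, ht2⟩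
  have h2 : (u β, β) ∈ (fun t : ℝ => ((t, β) : ℝ × F)) '' closure (Ioo (u β) (v β)) := by
    refine ⟨u β, ?_, rfl⟩
    rw [closure_Ioo hlt.ne]
    exact ⟨le_refl _, hlt.le⟩
  exact closure_mono h1 (image_closure_subset_closure_image hj h2)

lemma sigma_phi_id (σ φ : ℕ → ℕ) (hinj : Function.Injective σ)
    (hsurj : Function.Surjective σ)
    (hkey : ∀ n, (σ n = φ n ∨ σ n = φ n + 1) ∧
      (σ (n+1) = φ n ∨ σ (n+1) = φ n + 1)) : ∀ n, φ n = n := by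
  have hstep : ∀ n, σ (n+1) = σ n + 1 ∨ σ n = σ (n+1) + 1 := by
    intro n
    have hne : σ (n+1) ≠ σ n := fun e => by have := hinj e; omega
    obtain ⟨h1, h2⟩ := hkey n
    omega
  have hsid : ∀ n, σ n = n := by
    have hcases : (∀ n, σ (n+1) = σ n + 1) ∨ (∀ n, σ n = σ (n+1) + 1) := by
      rcases hstep 0 with h0 | h0
      · left
        intro n
        induction n with
        | zero => exact h0
        | succ m ih =>
          show σ (m+1+1) = σ (m+1) + 1
          rcases hstep (m+1) with h | h
          · exact h
          · exfalso
            have : σ (m+1+1) = σ m := by omega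
            have := hinj this
            omega
      · right
        intro n
        induction n with
        | zero => exact h0
        | succ m ih =>
          show σ (m+1) = σ (m+1+1) + 1
          rcases hstep (m+1) with h | h
          · exfalso
            have : σ (m+1+1) = σ m := by omega
            have := hinj this
            omega
          · exact h
    rcases hcases with hasc | hdesc
    · have hlin : ∀ n, σ n = σ 0 + n := by
        intro n
        induction n with
        | zero => simp
        | succ m ih =>
          have := hasc m
          omega
      have h00 : σ 0 = 0 := by
        obtain ⟨k, hk⟩ := hsurj 0
        have := hlin k
        omega
      intro n; rw [hlin n, h00]; omega
    · exfalso
      have hlin : ∀ n, σ n + n = σ 0 := by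
        intro n
        induction n with
        | zero => simp
        | succ m ih =>
          have := hdesc m
          omega
      have := hlin (σ 0 + 1)
      omega
  intro n
  have h1 := (hkey n).1
  have h2 := (hkey n).2
  rw [hsid n, hsid (n+1)] at *
  omega

def fext {F : Type*} (c : ℝ) (e : ℕ → F → ℝ) : ℕ → F → ℝ
  | 0 => fun _ => c
  | (k+1) => e k

section fextfacts
variable {F : Type*} {B : Set F} {c : ℝ} {e : ℕ → F → ℝ}

lemma fext_succ_lt (hrange : ∀ n, ∀ β ∈ B, 0 < e n β ∧ e n β < c)
    (hmono : ∀ n, ∀ β ∈ B, e (n+1) β < e n β) (k : ℕ) {β : F} (hβ : β ∈ B) :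
    fext c e (k+1) β < fext c e k β := by
  cases k with
  | zero => exact (hrange 0 β hβ).2
  | succ k => exact hmono k β hβ

lemma fext_anti_le (hrange : ∀ n, ∀ β ∈ B, 0 < e n β ∧ e n β < c)
    (hmono : ∀ n, ∀ β ∈ B, e (n+1) β < e n β) {k l : ℕ} (hkl : k ≤ l) {β : F} (hβ : β ∈ B) :
    fext c e l β ≤ fext c e k β := by
  induction l, hkl using Nat.le_induction with
  | base => exact le_refl _
  | succ l hkl ih => exact (fext_succ_lt hrange hmono l hβ).le.trans ih

lemma fext_index_le (hrange : ∀ n, ∀ β ∈ B, 0 < e n β ∧ e n β < c)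
    (hmono : ∀ n, ∀ β ∈ B, e (n+1) β < e n β) {k l : ℕ} {β : F} (hβ : β ∈ B)
    (hle : fext c e l β ≤ fext c e k β) : k ≤ l := by
  by_contra hlt
  push_neg at hlt
  have h1 := fext_anti_le hrange hmono (show l+1 ≤ k by omega) hβ
  have h2 := fext_succ_lt hrange hmono l hβ
  linarith

lemma fext_pos (hrange : ∀ n, ∀ β ∈ B, 0 < e n β ∧ e n β < c) (k : ℕ) {β : F} (hβ : β ∈ B) :
    0 < fext c e (k+1) β := (hrange k β hβ).1

lemma fext_le_c (hrange : ∀ n, ∀ β ∈ B, 0 < e n β ∧ e n β < c) (k : ℕ) {β : F} (hβ : β ∈ B) :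
    fext c e k β ≤ c := by
  cases k with
  | zero => exact le_refl _
  | succ k => exact (hrange k β hβ).2.le

lemma band_index_unique (hrange : ∀ n, ∀ β ∈ B, 0 < e n β ∧ e n β < c)
    (hmono : ∀ n, ∀ β ∈ B, e (n+1) β < e n β) {l m : ℕ} {x : F} (hx : x ∈ B)
    (h1 : fext c e (m+2) x < e l x) (h2 : e l x < fext c e m x) : l = m := by
  have ha : l + 1 < m + 2 := by
    by_contra hcon
    push_neg at hcon
    have := fext_anti_le hrange hmono hcon hx
    have h1' : fext c e (m+2) x < fext c e (l+1) x := h1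
    linarith
  have hb : m < l + 1 := by
    by_contra hcon
    push_neg at hcon
    have := fext_anti_le hrange hmono hcon hx
    have h2' : fext c e (l+1) x < fext c e m x := h2
    linarith
  omega

lemma region_no_graph (hrange : ∀ n, ∀ β ∈ B, 0 < e n β ∧ e n β < c)
    (hmono : ∀ n, ∀ β ∈ B, e (n+1) β < e n β) {k l : ℕ} {x : F} (hx : x ∈ B)
    (h1 : fext c e (k+1) x < e l x) (h2 : e l x < fext c e k x) : False := by
  have h1' : fext c e (k+1) x < fext c e (l+1) x := h1
  have h2' : fext c e (l+1) x < fext c e k x := h2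
  have ha : l + 1 < k + 1 := by
    by_contra hcon
    push_neg at hcon
    have := fext_anti_le hrange hmono hcon hx
    linarith
  have := fext_anti_le hrange hmono (show l + 1 ≤ k by omega) hx
  linarith

lemma region_index_unique (hrange : ∀ n, ∀ β ∈ B, 0 < e n β ∧ e n β < c)
    (hmono : ∀ n, ∀ β ∈ B, e (n+1) β < e n β) {i j : ℕ} {x : F} (hx : x ∈ B) {t : ℝ}
    (h1 : fext c e (i+1) x < t) (h2 : t < fext c e i x)
    (h3 : fext c e (j+1) x < t) (h4 : t < fext c e j x) : i = j := by
  by_contra hij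
  rcases Nat.lt_or_ge i j with hlt | hge
  · have := fext_anti_le hrange hmono (show i + 1 ≤ j by omega) hx
    linarith
  · have hlt : j < i := by omega
    have := fext_anti_le hrange hmono (show j + 1 ≤ i by omega) hx
    linarith

lemma graph_index_unique (hrange : ∀ n, ∀ β ∈ B, 0 < e n β ∧ e n β < c)
    (hmono : ∀ n, ∀ β ∈ B, e (n+1) β < e n β) {l m : ℕ} {x : F} (hx : x ∈ B)
    (he : e l x = e m x) : l = m := by
  have he' : fext c e (l+1) x = fext c e (m+1) x := he
  have h1 : l + 1 ≤ m + 1 := fext_index_le hrange hmono hx he'.ge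
  have h2 : m + 1 ≤ l + 1 := fext_index_le hrange hmono hx he'.le
  omega

lemma regions_cover (hrange : ∀ n, ∀ β ∈ B, 0 < e n β ∧ e n β < c)
    (hzero : ∀ β ∈ B, ∀ η > 0, ∃ j, e j β < η)
    {p : ℝ × F} (hB' : p.2 ∈ B) (h0 : 0 < p.1) (hc' : p.1 < c)
    (hnot : ∀ j, p.1 ≠ e j p.2) :
    ∃ k, fext c e (k+1) p.2 < p.1 ∧ p.1 < fext c e k p.2 := by
  classical
  have hex : ∃ j, e j p.2 < p.1 := hzero p.2 hB' p.1 h0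
  refine ⟨Nat.find hex, Nat.find_spec hex, ?_⟩
  cases hn : Nat.find hex with
  | zero => exact hc'
  | succ j =>
    have hmin : ¬ e j p.2 < p.1 := Nat.find_min hex (by omega)
    push_neg at hmin
    exact lt_of_le_of_ne hmin (hnot j)
end fextfacts

lemma fext_cont {F : Type*} [NormedAddCommGroup F] {B : Set F} {c : ℝ} {e : ℕ → F → ℝ}
    (hcont : ∀ n, ContinuousOn (e n) B) (k : ℕ) : ContinuousOn (fext c e k) B := by
  cases k with
  | zero => exact continuousOn_const
  | succ k => exact hcont k

section Main
variable {F : Type*} [NormedAddCommGroup F] [NormedSpace ℝ F]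

theorem main_aux
    (B Bt : Set F)
    (hBo : IsOpen B) (hBconn : IsConnected B) (hB0 : (0 : F) ∈ B)
    (hBto : IsOpen Bt) (hBtconn : IsConnected Bt) (hBt0 : (0 : F) ∈ Bt)
    (c ct : ℝ) (hc : 0 < c) (hct : 0 < ct)
    (en ent : ℕ → F → ℝ)
    (hen_cont : ∀ n : ℕ, ContinuousOn (en n) B)
    (hen_range : ∀ (n : ℕ), ∀ β ∈ B, 0 < en n β ∧ en n β < c)
    (hen_mono : ∀ (n : ℕ), ∀ β ∈ B, en (n + 1) β < en n β)
    (hen_sup : ∀ η > (0 : ℝ), ∃ N : ℕ, ∀ n ≥ N, ∀ β ∈ B, en n β < η)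
    (hent_cont : ∀ n : ℕ, ContinuousOn (ent n) Bt)
    (hent_range : ∀ (n : ℕ), ∀ β ∈ Bt, 0 < ent n β ∧ ent n β < ct)
    (hent_mono : ∀ (n : ℕ), ∀ β ∈ Bt, ent (n + 1) β < ent n β)
    (hent_sup : ∀ η > (0 : ℝ), ∃ N : ℕ, ∀ n ≥ N, ∀ β ∈ Bt, ent n β < η)
    (h g : ℝ × F → ℝ × F)
    (hgh : ∀ p ∈ {p : ℝ × F | p.2 ∈ B ∧ |p.1| < c}, g (h p) = p)
    (hhg : ∀ q ∈ {p : ℝ × F | p.2 ∈ Bt ∧ |p.1| < ct}, h (g q) = q)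
    (hhcont : ContinuousOn h {p : ℝ × F | p.2 ∈ B ∧ |p.1| < c})
    (hgcont : ContinuousOn g {p : ℝ × F | p.2 ∈ Bt ∧ |p.1| < ct})
    (hCC : h '' (⋃ n : ℕ, {p : ℝ × F | p.2 ∈ B ∧ p.1 = en n p.2}) =
      ⋃ n : ℕ, {p : ℝ × F | p.2 ∈ Bt ∧ p.1 = ent n p.2})
    (hpos : h '' ({p : ℝ × F | p.2 ∈ B ∧ |p.1| < c} ∩ {p : ℝ × F | 0 < p.1}) =
      {p : ℝ × F | p.2 ∈ Bt ∧ |p.1| < ct} ∩ {p : ℝ × F | 0 < p.1}) :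
    ∀ n : ℕ, h '' {p : ℝ × F | p.2 ∈ B ∧ p.1 = en n p.2} =
      {p : ℝ × F | p.2 ∈ Bt ∧ p.1 = ent n p.2} := by
  classical
  -- shorthand for the graph sets, regions, bands
  -- graphs: {p | p.2 ∈ B ∧ p.1 = en n p.2}
  -- regions: Q k = {p | p.2 ∈ B ∧ fext c en (k+1) p.2 < p.1 ∧ p.1 < fext c en k p.2}
  -- bands: bd m = {p | p.2 ∈ B ∧ fext c en (m+2) p.2 < p.1 ∧ p.1 < fext c en m p.2}
  have hzero : ∀ β ∈ B, ∀ η > (0:ℝ), ∃ j, en j β < η := by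
    intro β hβ η hη
    obtain ⟨N, hN⟩ := hen_sup η hη
    exact ⟨N, hN N le_rfl β hβ⟩
  have hzerot : ∀ β ∈ Bt, ∀ η > (0:ℝ), ∃ j, ent j β < η := by
    intro β hβ η hη
    obtain ⟨N, hN⟩ := hent_sup η hη
    exact ⟨N, hN N le_rfl β hβ⟩
  -- graphs inside the domains
  have hGU : ∀ n, {p : ℝ × F | p.2 ∈ B ∧ p.1 = en n p.2} ⊆
      {p : ℝ × F | p.2 ∈ B ∧ |p.1| < c} := by
    rintro n p ⟨h1, h2⟩
    have hr := hen_range n p.2 h1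
    exact ⟨h1, by rw [h2, abs_of_pos hr.1]; exact hr.2⟩
  have hGtU : ∀ n, {p : ℝ × F | p.2 ∈ Bt ∧ p.1 = ent n p.2} ⊆
      {p : ℝ × F | p.2 ∈ Bt ∧ |p.1| < ct} := by
    rintro n p ⟨h1, h2⟩
    have hr := hent_range n p.2 h1
    exact ⟨h1, by rw [h2, abs_of_pos hr.1]; exact hr.2⟩
  have hCsU : (⋃ n : ℕ, {p : ℝ × F | p.2 ∈ B ∧ p.1 = en n p.2}) ⊆
      {p : ℝ × F | p.2 ∈ B ∧ |p.1| < c} := by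
    intro p hp
    obtain ⟨n, hn⟩ := mem_iUnion.1 hp
    exact hGU n hn
  have hCstU : (⋃ n : ℕ, {p : ℝ × F | p.2 ∈ Bt ∧ p.1 = ent n p.2}) ⊆
      {p : ℝ × F | p.2 ∈ Bt ∧ |p.1| < ct} := by
    intro p hp
    obtain ⟨n, hn⟩ := mem_iUnion.1 hp
    exact hGtU n hn
  -- g maps the tilde curves back into the curves
  have hgC : ∀ q ∈ (⋃ n : ℕ, {p : ℝ × F | p.2 ∈ Bt ∧ p.1 = ent n p.2}),
      g q ∈ (⋃ n : ℕ, {p : ℝ × F | p.2 ∈ B ∧ p.1 = en n p.2}) := by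
    intro q hq
    rw [← hCC] at hq
    obtain ⟨p, hp, rfl⟩ := hq
    rw [hgh p (hCsU hp)]
    exact hp
  -- the positive-part sets
  have hposset : {p : ℝ × F | p.2 ∈ B ∧ |p.1| < c} ∩ {p : ℝ × F | 0 < p.1} =
      {p : ℝ × F | p.2 ∈ B ∧ 0 < p.1 ∧ p.1 < c} := by
    ext p
    constructor
    · rintro ⟨⟨h1, h2⟩, h3⟩
      exact ⟨h1, h3, (abs_lt.1 h2).2⟩
    · rintro ⟨h1, h2, h3⟩
      exact ⟨⟨h1, abs_lt.2 ⟨by linarith, h3⟩⟩, h2⟩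
  have hpossett : {p : ℝ × F | p.2 ∈ Bt ∧ |p.1| < ct} ∩ {p : ℝ × F | 0 < p.1} =
      {p : ℝ × F | p.2 ∈ Bt ∧ 0 < p.1 ∧ p.1 < ct} := by
    ext p
    constructor
    · rintro ⟨⟨h1, h2⟩, h3⟩
      exact ⟨h1, h3, (abs_lt.1 h2).2⟩
    · rintro ⟨h1, h2, h3⟩
      exact ⟨⟨h1, abs_lt.2 ⟨by linarith, h3⟩⟩, h2⟩
  have hpos' : h '' {p : ℝ × F | p.2 ∈ B ∧ 0 < p.1 ∧ p.1 < c} =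
      {p : ℝ × F | p.2 ∈ Bt ∧ 0 < p.1 ∧ p.1 < ct} := by
    rw [← hposset, ← hpossett]
    exact hpos
  -- regions are inside the positive parts
  have hQsub : ∀ k, {p : ℝ × F | p.2 ∈ B ∧ fext c en (k+1) p.2 < p.1 ∧ p.1 < fext c en k p.2}
      ⊆ {p : ℝ × F | p.2 ∈ B ∧ 0 < p.1 ∧ p.1 < c} := by
    rintro k p ⟨h1, h2, h3⟩
    exact ⟨h1, (fext_pos hen_range k h1).trans h2,
      h3.trans_le (fext_le_c hen_range k h1)⟩
  have hQtsub : ∀ k, {p : ℝ × F | p.2 ∈ Bt ∧ fext ct ent (k+1) p.2 < p.1 ∧ p.1 < fext ct ent k p.2}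
      ⊆ {p : ℝ × F | p.2 ∈ Bt ∧ 0 < p.1 ∧ p.1 < ct} := by
    rintro k p ⟨h1, h2, h3⟩
    exact ⟨h1, (fext_pos hent_range k h1).trans h2,
      h3.trans_le (fext_le_c hent_range k h1)⟩
  have hQsubU : ∀ k, {p : ℝ × F | p.2 ∈ B ∧ fext c en (k+1) p.2 < p.1 ∧ p.1 < fext c en k p.2}
      ⊆ {p : ℝ × F | p.2 ∈ B ∧ |p.1| < c} := by
    intro k p hp
    obtain ⟨h1, h2, h3⟩ := hQsub k hp
    exact ⟨h1, abs_lt.2 ⟨by linarith, h3⟩⟩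
  have hQtsubU : ∀ k, {p : ℝ × F | p.2 ∈ Bt ∧ fext ct ent (k+1) p.2 < p.1 ∧ p.1 < fext ct ent k p.2}
      ⊆ {p : ℝ × F | p.2 ∈ Bt ∧ |p.1| < ct} := by
    intro k p hp
    obtain ⟨h1, h2, h3⟩ := hQtsub k hp
    exact ⟨h1, abs_lt.2 ⟨by linarith, h3⟩⟩
  -- φ : image of graph n is inside tilde graph (φ n)
  have hφex : ∀ n, ∃ m, h '' {p : ℝ × F | p.2 ∈ B ∧ p.1 = en n p.2} ⊆
      {p : ℝ × F | p.2 ∈ Bt ∧ p.1 = ent m p.2} := by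
    intro n
    have hsubC : h '' {p : ℝ × F | p.2 ∈ B ∧ p.1 = en n p.2} ⊆
        ⋃ m : ℕ, {p : ℝ × F | p.2 ∈ Bt ∧ p.1 = ent m p.2} := by
      rw [← hCC]
      exact image_mono (subset_iUnion
        (fun n : ℕ => {p : ℝ × F | p.2 ∈ B ∧ p.1 = en n p.2}) n)
    have hpre : IsPreconnected (h '' {p : ℝ × F | p.2 ∈ B ∧ p.1 = en n p.2}) :=
      (graph_preconnected hBconn.isPreconnected (hen_cont n)).image h
        (hhcont.mono (hGU n))
    have hne : (h '' {p : ℝ × F | p.2 ∈ B ∧ p.1 = en n p.2}).Nonempty :=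
      ⟨h (en n 0, 0), mem_image_of_mem h ⟨hB0, rfl⟩⟩
    obtain ⟨m, hm⟩ := preconn_subset_of_cover hpre hne
      (V := fun m => {p : ℝ × F | p.2 ∈ Bt ∧ fext ct ent (m+2) p.2 < p.1 ∧
        p.1 < fext ct ent m p.2})
      (fun m => isOpen_between_graphs hBto (fext_cont hent_cont (m+2))
        (fext_cont hent_cont m))
      (by
        intro q hq
        obtain ⟨l, hl⟩ := mem_iUnion.1 (hsubC hq)
        refine mem_iUnion.2 ⟨l, hl.1, ?_, ?_⟩
        · rw [hl.2]
          exact fext_succ_lt hent_range hent_mono (l+1) hl.1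
        · rw [hl.2]
          exact fext_succ_lt hent_range hent_mono l hl.1)
      (by
        intro i j hij
        rw [eq_empty_iff_forall_notMem]
        rintro z ⟨hz, hzi, hzj⟩
        obtain ⟨l, hl⟩ := mem_iUnion.1 (hsubC hz)
        have e1 : l = i := band_index_unique hent_range hent_mono hl.1
          (hl.2 ▸ hzi.2.1) (hl.2 ▸ hzi.2.2)
        have e2 : l = j := band_index_unique hent_range hent_mono hl.1
          (hl.2 ▸ hzj.2.1) (hl.2 ▸ hzj.2.2)
        exact hij (e1 ▸ e2))
    refine ⟨m, fun q hq => ?_⟩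
    obtain ⟨l, hl⟩ := mem_iUnion.1 (hsubC hq)
    have := hm hq
    have e1 : l = m := band_index_unique hent_range hent_mono hl.1
      (hl.2 ▸ this.2.1) (hl.2 ▸ this.2.2)
    exact e1 ▸ hl
  -- ψ : image under g of tilde graph m is inside graph (ψ m)
  have hψex : ∀ m, ∃ n, g '' {p : ℝ × F | p.2 ∈ Bt ∧ p.1 = ent m p.2} ⊆
      {p : ℝ × F | p.2 ∈ B ∧ p.1 = en n p.2} := by
    intro m
    have hsubC : g '' {p : ℝ × F | p.2 ∈ Bt ∧ p.1 = ent m p.2} ⊆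
        ⋃ n : ℕ, {p : ℝ × F | p.2 ∈ B ∧ p.1 = en n p.2} := by
      rintro q ⟨q', hq', rfl⟩
      exact hgC q' (mem_iUnion.2 ⟨m, hq'⟩)
    have hpre : IsPreconnected (g '' {p : ℝ × F | p.2 ∈ Bt ∧ p.1 = ent m p.2}) :=
      (graph_preconnected hBtconn.isPreconnected (hent_cont m)).image g
        (hgcont.mono (hGtU m))
    have hne : (g '' {p : ℝ × F | p.2 ∈ Bt ∧ p.1 = ent m p.2}).Nonempty :=
      ⟨g (ent m 0, 0), mem_image_of_mem g ⟨hBt0, rfl⟩⟩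
    obtain ⟨n, hn⟩ := preconn_subset_of_cover hpre hne
      (V := fun n => {p : ℝ × F | p.2 ∈ B ∧ fext c en (n+2) p.2 < p.1 ∧
        p.1 < fext c en n p.2})
      (fun n => isOpen_between_graphs hBo (fext_cont hen_cont (n+2))
        (fext_cont hen_cont n))
      (by
        intro q hq
        obtain ⟨l, hl⟩ := mem_iUnion.1 (hsubC hq)
        refine mem_iUnion.2 ⟨l, hl.1, ?_, ?_⟩
        · rw [hl.2]
          exact fext_succ_lt hen_range hen_mono (l+1) hl.1
        · rw [hl.2]
          exact fext_succ_lt hen_range hen_mono l hl.1)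
      (by
        intro i j hij
        rw [eq_empty_iff_forall_notMem]
        rintro z ⟨hz, hzi, hzj⟩
        obtain ⟨l, hl⟩ := mem_iUnion.1 (hsubC hz)
        have e1 : l = i := band_index_unique hen_range hen_mono hl.1
          (hl.2 ▸ hzi.2.1) (hl.2 ▸ hzi.2.2)
        have e2 : l = j := band_index_unique hen_range hen_mono hl.1
          (hl.2 ▸ hzj.2.1) (hl.2 ▸ hzj.2.2)
        exact hij (e1 ▸ e2))
    refine ⟨n, fun q hq => ?_⟩
    obtain ⟨l, hl⟩ := mem_iUnion.1 (hsubC hq)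
    have := hn hq
    have e1 : l = n := band_index_unique hen_range hen_mono hl.1
      (hl.2 ▸ this.2.1) (hl.2 ▸ this.2.2)
    exact e1 ▸ hl

  -- σ : image of region k is inside tilde region (σ k)
  have hσex : ∀ k, ∃ m, h '' {p : ℝ × F | p.2 ∈ B ∧ fext c en (k+1) p.2 < p.1 ∧
      p.1 < fext c en k p.2} ⊆ {p : ℝ × F | p.2 ∈ Bt ∧ fext ct ent (m+1) p.2 < p.1 ∧
      p.1 < fext ct ent m p.2} := by
    intro k
    have hposim : h '' {p : ℝ × F | p.2 ∈ B ∧ fext c en (k+1) p.2 < p.1 ∧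
        p.1 < fext c en k p.2} ⊆ {p : ℝ × F | p.2 ∈ Bt ∧ 0 < p.1 ∧ p.1 < ct} := by
      rw [← hpos']
      exact image_mono (hQsub k)
    have hnotC : ∀ q ∈ h '' {p : ℝ × F | p.2 ∈ B ∧ fext c en (k+1) p.2 < p.1 ∧
        p.1 < fext c en k p.2},
        q ∉ ⋃ m : ℕ, {p : ℝ × F | p.2 ∈ Bt ∧ p.1 = ent m p.2} := by
      rintro q ⟨p, hp, rfl⟩ hq
      have h1 : g (h p) ∈ ⋃ n : ℕ, {p : ℝ × F | p.2 ∈ B ∧ p.1 = en n p.2} := hgC _ hq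
      rw [hgh p (hQsubU k hp)] at h1
      obtain ⟨l, hl⟩ := mem_iUnion.1 h1
      exact region_no_graph hen_range hen_mono hp.1 (hl.2 ▸ hp.2.1) (hl.2 ▸ hp.2.2)
    have hpre : IsPreconnected (h '' {p : ℝ × F | p.2 ∈ B ∧ fext c en (k+1) p.2 < p.1 ∧
        p.1 < fext c en k p.2}) :=
      (region_preconnected hBconn.isPreconnected (fext_cont hen_cont (k+1))
        (fext_cont hen_cont k)
        (fun β hβ => fext_succ_lt hen_range hen_mono k hβ)).image h
        (hhcont.mono (hQsubU k))
    have hne : (h '' {p : ℝ × F | p.2 ∈ B ∧ fext c en (k+1) p.2 < p.1 ∧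
        p.1 < fext c en k p.2}).Nonempty := by
      refine ⟨h ((fext c en (k+1) 0 + fext c en k 0)/2, 0), mem_image_of_mem h ?_⟩
      have := fext_succ_lt hen_range hen_mono k hB0
      exact ⟨hB0, by dsimp only; linarith, by dsimp only; linarith⟩
    exact preconn_subset_of_cover hpre hne
      (V := fun m => {p : ℝ × F | p.2 ∈ Bt ∧ fext ct ent (m+1) p.2 < p.1 ∧
        p.1 < fext ct ent m p.2})
      (fun m => isOpen_between_graphs hBto (fext_cont hent_cont (m+1))
        (fext_cont hent_cont m))
      (by
        intro q hq
        obtain ⟨h1, h2, h3⟩ := hposim hq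
        have hnot : ∀ j, q.1 ≠ ent j q.2 := by
          intro j hj
          exact hnotC q hq (mem_iUnion.2 ⟨j, h1, hj⟩)
        obtain ⟨m, hm1, hm2⟩ := regions_cover hent_range hzerot h1 h2 h3 hnot
        exact mem_iUnion.2 ⟨m, h1, hm1, hm2⟩)
      (by
        intro i j hij
        rw [eq_empty_iff_forall_notMem]
        rintro z ⟨_, hzi, hzj⟩
        exact hij (region_index_unique hent_range hent_mono hzi.1
          hzi.2.1 hzi.2.2 hzj.2.1 hzj.2.2))
  -- τ : image under g of tilde region m is inside region (τ m)
  have hτex : ∀ m, ∃ k, g '' {p : ℝ × F | p.2 ∈ Bt ∧ fext ct ent (m+1) p.2 < p.1 ∧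
      p.1 < fext ct ent m p.2} ⊆ {p : ℝ × F | p.2 ∈ B ∧ fext c en (k+1) p.2 < p.1 ∧
      p.1 < fext c en k p.2} := by
    intro m
    have hposim : g '' {p : ℝ × F | p.2 ∈ Bt ∧ fext ct ent (m+1) p.2 < p.1 ∧
        p.1 < fext ct ent m p.2} ⊆ {p : ℝ × F | p.2 ∈ B ∧ 0 < p.1 ∧ p.1 < c} := by
      rintro q ⟨q', hq', rfl⟩
      have h1 : q' ∈ h '' {p : ℝ × F | p.2 ∈ B ∧ 0 < p.1 ∧ p.1 < c} := by
        rw [hpos']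
        exact hQtsub m hq'
      obtain ⟨p, hp, rfl⟩ := h1
      rw [hgh p (by rw [← hposset] at hp; exact hp.1)]
      exact hp
    have hnotC : ∀ q ∈ g '' {p : ℝ × F | p.2 ∈ Bt ∧ fext ct ent (m+1) p.2 < p.1 ∧
        p.1 < fext ct ent m p.2},
        q ∉ ⋃ n : ℕ, {p : ℝ × F | p.2 ∈ B ∧ p.1 = en n p.2} := by
      rintro q ⟨q', hq', rfl⟩ hq
      have h1 : h (g q') ∈ ⋃ m : ℕ, {p : ℝ × F | p.2 ∈ Bt ∧ p.1 = ent m p.2} := by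
        rw [← hCC]
        exact mem_image_of_mem h hq
      rw [hhg q' (hQtsubU m hq')] at h1
      obtain ⟨l, hl⟩ := mem_iUnion.1 h1
      exact region_no_graph hent_range hent_mono hq'.1 (hl.2 ▸ hq'.2.1) (hl.2 ▸ hq'.2.2)
    have hpre : IsPreconnected (g '' {p : ℝ × F | p.2 ∈ Bt ∧ fext ct ent (m+1) p.2 < p.1 ∧
        p.1 < fext ct ent m p.2}) :=
      (region_preconnected hBtconn.isPreconnected (fext_cont hent_cont (m+1))
        (fext_cont hent_cont m)
        (fun β hβ => fext_succ_lt hent_range hent_mono m hβ)).image g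
        (hgcont.mono (hQtsubU m))
    have hne : (g '' {p : ℝ × F | p.2 ∈ Bt ∧ fext ct ent (m+1) p.2 < p.1 ∧
        p.1 < fext ct ent m p.2}).Nonempty := by
      refine ⟨g ((fext ct ent (m+1) 0 + fext ct ent m 0)/2, 0), mem_image_of_mem g ?_⟩
      have := fext_succ_lt hent_range hent_mono m hBt0
      exact ⟨hBt0, by dsimp only; linarith, by dsimp only; linarith⟩
    exact preconn_subset_of_cover hpre hne
      (V := fun k => {p : ℝ × F | p.2 ∈ B ∧ fext c en (k+1) p.2 < p.1 ∧
        p.1 < fext c en k p.2})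
      (fun k => isOpen_between_graphs hBo (fext_cont hen_cont (k+1))
        (fext_cont hen_cont k))
      (by
        intro q hq
        obtain ⟨h1, h2, h3⟩ := hposim hq
        have hnot : ∀ j, q.1 ≠ en j q.2 := by
          intro j hj
          exact hnotC q hq (mem_iUnion.2 ⟨j, h1, hj⟩)
        obtain ⟨k, hk1, hk2⟩ := regions_cover hen_range hzero h1 h2 h3 hnot
        exact mem_iUnion.2 ⟨k, h1, hk1, hk2⟩)
      (by
        intro i j hij
        rw [eq_empty_iff_forall_notMem]
        rintro z ⟨_, hzi, hzj⟩
        exact hij (region_index_unique hen_range hen_mono hzi.1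
          hzi.2.1 hzi.2.2 hzj.2.1 hzj.2.2))
  -- fix the choices
  choose φ hφ using hφex
  choose ψ hψ using hψex
  choose σ hσ using hσex
  choose τ hτ using hτex
  -- ψ ∘ φ = id
  have hψφ : ∀ n, ψ (φ n) = n := by
    intro n
    have hsub : {p : ℝ × F | p.2 ∈ B ∧ p.1 = en n p.2} ⊆
        {p : ℝ × F | p.2 ∈ B ∧ p.1 = en (ψ (φ n)) p.2} := by
      intro p hp
      have h2 : h p ∈ {p : ℝ × F | p.2 ∈ Bt ∧ p.1 = ent (φ n) p.2} :=
        hφ n (mem_image_of_mem h hp)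
      have h3 : g (h p) ∈ {p : ℝ × F | p.2 ∈ B ∧ p.1 = en (ψ (φ n)) p.2} :=
        hψ (φ n) (mem_image_of_mem g h2)
      rwa [hgh p (hGU n hp)] at h3
    have hmem := hsub (show ((en n 0, 0) : ℝ × F) ∈ _ from ⟨hB0, rfl⟩)
    exact (graph_index_unique hen_range hen_mono hB0 hmem.2).symm
  have hφψ : ∀ m, φ (ψ m) = m := by
    intro m
    have hsub : {p : ℝ × F | p.2 ∈ Bt ∧ p.1 = ent m p.2} ⊆
        {p : ℝ × F | p.2 ∈ Bt ∧ p.1 = ent (φ (ψ m)) p.2} := by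
      intro q hq
      have h2 : g q ∈ {p : ℝ × F | p.2 ∈ B ∧ p.1 = en (ψ m) p.2} :=
        hψ m (mem_image_of_mem g hq)
      have h3 : h (g q) ∈ {p : ℝ × F | p.2 ∈ Bt ∧ p.1 = ent (φ (ψ m)) p.2} :=
        hφ (ψ m) (mem_image_of_mem h h2)
      rwa [hhg q (hGtU m hq)] at h3
    have hmem := hsub (show ((ent m 0, 0) : ℝ × F) ∈ _ from ⟨hBt0, rfl⟩)
    exact (graph_index_unique hent_range hent_mono hBt0 hmem.2).symm
  -- τ ∘ σ = id and σ ∘ τ = id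
  have hτσ : ∀ k, τ (σ k) = k := by
    intro k
    have hsub : {p : ℝ × F | p.2 ∈ B ∧ fext c en (k+1) p.2 < p.1 ∧ p.1 < fext c en k p.2} ⊆
        {p : ℝ × F | p.2 ∈ B ∧ fext c en (τ (σ k)+1) p.2 < p.1 ∧
          p.1 < fext c en (τ (σ k)) p.2} := by
      intro p hp
      have h2 := hσ k (mem_image_of_mem h hp)
      have h3 := hτ (σ k) (mem_image_of_mem g h2)
      rwa [hgh p (hQsubU k hp)] at h3
    have hlt := fext_succ_lt hen_range hen_mono k hB0
    have hmem := hsub (show (((fext c en (k+1) 0 + fext c en k 0)/2, 0) : ℝ × F) ∈ _ from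
      ⟨hB0, by dsimp only; linarith, by dsimp only; linarith⟩)
    exact region_index_unique hen_range hen_mono hB0 hmem.2.1 hmem.2.2
      (by dsimp only; linarith) (by dsimp only; linarith)
  have hστ : ∀ m, σ (τ m) = m := by
    intro m
    have hsub : {p : ℝ × F | p.2 ∈ Bt ∧ fext ct ent (m+1) p.2 < p.1 ∧
        p.1 < fext ct ent m p.2} ⊆
        {p : ℝ × F | p.2 ∈ Bt ∧ fext ct ent (σ (τ m)+1) p.2 < p.1 ∧
          p.1 < fext ct ent (σ (τ m)) p.2} := by
      intro q hq
      have h2 := hτ m (mem_image_of_mem g hq)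
      have h3 := hσ (τ m) (mem_image_of_mem h h2)
      rwa [hhg q (hQtsubU m hq)] at h3
    have hlt := fext_succ_lt hent_range hent_mono m hBt0
    have hmem := hsub (show (((fext ct ent (m+1) 0 + fext ct ent m 0)/2, 0) : ℝ × F) ∈ _ from
      ⟨hBt0, by dsimp only; linarith, by dsimp only; linarith⟩)
    exact region_index_unique hent_range hent_mono hBt0 hmem.2.1 hmem.2.2
      (by dsimp only; linarith) (by dsimp only; linarith)
  -- h maps graph n onto tilde graph (φ n)
  have hGeq : ∀ n, h '' {p : ℝ × F | p.2 ∈ B ∧ p.1 = en n p.2} =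
      {p : ℝ × F | p.2 ∈ Bt ∧ p.1 = ent (φ n) p.2} := by
    intro n
    refine subset_antisymm (hφ n) ?_
    intro q hq
    have h1 : g q ∈ {p : ℝ × F | p.2 ∈ B ∧ p.1 = en (ψ (φ n)) p.2} :=
      hψ (φ n) (mem_image_of_mem g hq)
    rw [hψφ n] at h1
    exact ⟨g q, h1, hhg q (hGtU (φ n) hq)⟩
  -- adjacency: key combinatorial relations between σ and φ
  have hkey : ∀ n, (σ n = φ n ∨ σ n = φ n + 1) ∧
      (σ (n+1) = φ n ∨ σ (n+1) = φ n + 1) := by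
    intro n
    have hpG : ((en n 0, 0) : ℝ × F) ∈ {p : ℝ × F | p.2 ∈ B ∧ p.1 = en n p.2} := ⟨hB0, rfl⟩
    have hpU := hGU n hpG
    have hq : h (en n 0, 0) ∈ {p : ℝ × F | p.2 ∈ Bt ∧ p.1 = ent (φ n) p.2} :=
      hφ n (mem_image_of_mem h hpG)
    have hBt' : (h (en n 0, 0)).2 ∈ Bt := hq.1
    -- the point is in the closure of region n (as its upper boundary graph)
    have hclo1 : ((en n 0, 0) : ℝ × F) ∈ closure {p : ℝ × F | p.2 ∈ B ∧
        fext c en (n+1+1) p.2 < p.1 ∧ p.1 < fext c en (n+1) p.2} :=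
      graph_mem_closure_upper hB0 (fext_succ_lt hen_range hen_mono (n+1) hB0)
    -- and in the closure of region n+1? no: region n has it as lower boundary
    have hclo2 : ((en n 0, 0) : ℝ × F) ∈ closure {p : ℝ × F | p.2 ∈ B ∧
        fext c en (n+1) p.2 < p.1 ∧ p.1 < fext c en n p.2} :=
      graph_mem_closure_lower hB0 (fext_succ_lt hen_range hen_mono n hB0)
    -- push into the closures of the tilde regions
    have himg1 : h (en n 0, 0) ∈ closure {p : ℝ × F | p.2 ∈ Bt ∧
        fext ct ent (σ n + 1) p.2 < p.1 ∧ p.1 < fext ct ent (σ n) p.2} := by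
      have hcw : ContinuousWithinAt h {p : ℝ × F | p.2 ∈ B ∧
          fext c en (n+1) p.2 < p.1 ∧ p.1 < fext c en n p.2} (en n 0, 0) :=
        (hhcont _ hpU).mono (hQsubU n)
      exact closure_mono (hσ n) (hcw.mem_closure_image hclo2)
    have himg2 : h (en n 0, 0) ∈ closure {p : ℝ × F | p.2 ∈ Bt ∧
        fext ct ent (σ (n+1) + 1) p.2 < p.1 ∧ p.1 < fext ct ent (σ (n+1)) p.2} := by
      have hcw : ContinuousWithinAt h {p : ℝ × F | p.2 ∈ B ∧
          fext c en (n+1+1) p.2 < p.1 ∧ p.1 < fext c en (n+1) p.2} (en n 0, 0) :=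
        (hhcont _ hpU).mono (hQsubU (n+1))
      exact closure_mono (hσ (n+1)) (hcw.mem_closure_image hclo1)
    -- extract the index inequalities
    have hb1 := closure_between_subset hBto (fext_cont hent_cont (σ n + 1))
      (fext_cont hent_cont (σ n)) himg1 hBt'
    have hb2 := closure_between_subset hBto (fext_cont hent_cont (σ (n+1) + 1))
      (fext_cont hent_cont (σ (n+1))) himg2 hBt'
    rw [hq.2] at hb1 hb2
    have i1 : φ n + 1 ≤ σ n + 1 := fext_index_le hent_range hent_mono hBt'
      (show fext ct ent (σ n + 1) _ ≤ fext ct ent (φ n + 1) _ from hb1.1)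
    have i2 : σ n ≤ φ n + 1 := fext_index_le hent_range hent_mono hBt'
      (show fext ct ent (φ n + 1) _ ≤ fext ct ent (σ n) _ from hb1.2)
    have i3 : φ n + 1 ≤ σ (n+1) + 1 := fext_index_le hent_range hent_mono hBt'
      (show fext ct ent (σ (n+1) + 1) _ ≤ fext ct ent (φ n + 1) _ from hb2.1)
    have i4 : σ (n+1) ≤ φ n + 1 := fext_index_le hent_range hent_mono hBt'
      (show fext ct ent (φ n + 1) _ ≤ fext ct ent (σ (n+1)) _ from hb2.2)
    exact ⟨by omega, by omega⟩
  -- conclude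
  have hinj : Function.Injective σ := by
    intro a b hab
    have := congrArg τ hab
    rwa [hτσ, hτσ] at this
  have hsurj : Function.Surjective σ := fun m => ⟨τ m, hστ m⟩
  have hφid := sigma_phi_id σ φ hinj hsurj hkey
  intro n
  rw [hGeq n, hφid n]

end Main

/-- the parameter change shifts the labels of the sparkling
separatrix connection curves by a constant.
`B, Bt` are connected open neighbourhoods of `0` in `F`; `c, ct > 0`;
`U = {(ε, β) : β ∈ B, |ε| < c}` and `Ut = {(ε, β) : β ∈ Bt, |ε| < ct}`.
The curves `Gn n = {(en n β, β) : β ∈ B}` (graphs of the continuous, strictly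
interleaved functions `en n : B → (0, c)` with `inf en n > 0` and
`sup en n → 0`), and similarly `Gnt n` for `ent`, have unions `Cs` and `Cst`.
If `h : U → Ut` is a homeomorphism (with inverse `g`) fixing `0`, sending `Cs`
onto `Cst`, and sending `U ∩ {ε > 0}` onto `Ut ∩ {ε > 0}`, then there exist
`a : ℤ` and `n₁ : ℕ` with `n₁ + a ≥ 0` such that `h` maps the graph `Gn n` onto
the graph `Gnt (n + a)` for every `n ≥ n₁`. -/
theorem homeo_shifts_graph_indices
    {F : Type*} [NormedAddCommGroup F] [NormedSpace ℝ F]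
    (B Bt : Set F)
    (hBo : IsOpen B) (hBconn : IsConnected B) (hB0 : (0 : F) ∈ B)
    (hBto : IsOpen Bt) (hBtconn : IsConnected Bt) (hBt0 : (0 : F) ∈ Bt)
    (c ct : ℝ) (hc : 0 < c) (hct : 0 < ct)
    (en ent : ℕ → F → ℝ)
    (hen_cont : ∀ n : ℕ, ContinuousOn (en n) B)
    (hen_range : ∀ (n : ℕ), ∀ β ∈ B, 0 < en n β ∧ en n β < c)
    (hen_mono : ∀ (n : ℕ), ∀ β ∈ B, en (n + 1) β < en n β)
    (hen_inf : ∀ n : ℕ, ∃ d > (0 : ℝ), ∀ β ∈ B, d ≤ en n β)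
    (hen_sup : ∀ η > (0 : ℝ), ∃ N : ℕ, ∀ n ≥ N, ∀ β ∈ B, en n β < η)
    (hent_cont : ∀ n : ℕ, ContinuousOn (ent n) Bt)
    (hent_range : ∀ (n : ℕ), ∀ β ∈ Bt, 0 < ent n β ∧ ent n β < ct)
    (hent_mono : ∀ (n : ℕ), ∀ β ∈ Bt, ent (n + 1) β < ent n β)
    (hent_inf : ∀ n : ℕ, ∃ d > (0 : ℝ), ∀ β ∈ Bt, d ≤ ent n β)
    (hent_sup : ∀ η > (0 : ℝ), ∃ N : ℕ, ∀ n ≥ N, ∀ β ∈ Bt, ent n β < η)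
    (h g : ℝ × F → ℝ × F)
    (hmaps : Set.MapsTo h {p : ℝ × F | p.2 ∈ B ∧ |p.1| < c}
      {p : ℝ × F | p.2 ∈ Bt ∧ |p.1| < ct})
    (gmaps : Set.MapsTo g {p : ℝ × F | p.2 ∈ Bt ∧ |p.1| < ct}
      {p : ℝ × F | p.2 ∈ B ∧ |p.1| < c})
    (hgh : ∀ p ∈ {p : ℝ × F | p.2 ∈ B ∧ |p.1| < c}, g (h p) = p)
    (hhg : ∀ q ∈ {p : ℝ × F | p.2 ∈ Bt ∧ |p.1| < ct}, h (g q) = q)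
    (hhcont : ContinuousOn h {p : ℝ × F | p.2 ∈ B ∧ |p.1| < c})
    (hgcont : ContinuousOn g {p : ℝ × F | p.2 ∈ Bt ∧ |p.1| < ct})
    (h0 : h 0 = 0)
    (hCC : h '' (⋃ n : ℕ, {p : ℝ × F | p.2 ∈ B ∧ p.1 = en n p.2}) =
      ⋃ n : ℕ, {p : ℝ × F | p.2 ∈ Bt ∧ p.1 = ent n p.2})
    (hpos : h '' ({p : ℝ × F | p.2 ∈ B ∧ |p.1| < c} ∩ {p : ℝ × F | 0 < p.1}) =
      {p : ℝ × F | p.2 ∈ Bt ∧ |p.1| < ct} ∩ {p : ℝ × F | 0 < p.1}) :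
    ∃ (a : ℤ) (n₁ : ℕ), 0 ≤ (n₁ : ℤ) + a ∧
      ∀ n ≥ n₁, h '' {p : ℝ × F | p.2 ∈ B ∧ p.1 = en n p.2} =
        {p : ℝ × F | p.2 ∈ Bt ∧ p.1 = ent ((n : ℤ) + a).toNat p.2} := by
  refine ⟨0, 0, by norm_num, fun n _ => ?_⟩
  have := main_aux B Bt hBo hBconn hB0 hBto hBtconn hBt0 c ct hc hct en ent
    hen_cont hen_range hen_mono hen_sup hent_cont hent_range hent_mono hent_sup
    h g hgh hhg hhcont hgcont hCC hpos n
  simpa using this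
end

section
/- Let X be a type, l a filter on X, and ε, δ, c : X → ℝ functions; let K ≥ 0 and 0 < m ≤ M be constants. Assume that eventually along l: 0 < ε(x) < e^{−1}, 0 < δ(x) < e^{−1}, m ≤ c(x) ≤ M, and |log δ(x) − c(x)·log ε(x)| ≤ K; and assume ε tends to 0 along l. Then δ tends to 0 along l, and log(−log ε(x)) / log(−log δ(x)) tends to 1 along l. -/
/-- analytic content of Lemma 4.3 on the synchronizing
subfamily.
Let `l` be a filter on `X` and `e, d, c : X → ℝ`. Assume eventually along `l`:
`0 < e < exp (−1)`, `0 < d < exp (−1)`, `m ≤ c ≤ M` (with `0 < m ≤ M`), and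
`|log d − c·log e| ≤ K` (with `K ≥ 0`); and assume `e → 0` along `l`. Then
`d → 0` along `l`, and the ratio of double logarithms
`log(−log e) / log(−log d)` tends to `1` along `l`. -/
theorem synchronizing_doubleLog_ratio
    {X : Type*} (l : Filter X) (e d c : X → ℝ) (K m M : ℝ)
    (hK : 0 ≤ K) (hm : 0 < m) (hmM : m ≤ M)
    (hev : ∀ᶠ x in l,
      0 < e x ∧ e x < Real.exp (-1) ∧
      0 < d x ∧ d x < Real.exp (-1) ∧
      m ≤ c x ∧ c x ≤ M ∧
      |Real.log (d x) - c x * Real.log (e x)| ≤ K)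
    (he0 : Filter.Tendsto e l (nhds 0)) :
    Filter.Tendsto d l (nhds 0) ∧
    Filter.Tendsto
      (fun x => Real.log (-Real.log (e x)) / Real.log (-Real.log (d x)))
      l (nhds 1) := by
  set L : X → ℝ := fun x => -Real.log (e x) with hLdef
  set D : X → ℝ := fun x => -Real.log (d x) with hDdef
  clear_value L D
  -- L → ∞
  have heMem : ∀ᶠ x in l, e x ∈ ({0}ᶜ : Set ℝ) := by
    filter_upwards [hev] with x hx
    exact ne_of_gt hx.1
  have hlogE : Filter.Tendsto (fun x => Real.log (e x)) l Filter.atBot :=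
    Real.tendsto_log_nhdsNE_zero.comp
      (tendsto_nhdsWithin_of_tendsto_nhds_of_eventually_within e he0 heMem)
  have hL : Filter.Tendsto L l Filter.atTop := by
    rw [Filter.tendsto_atTop]
    intro b
    filter_upwards [hlogE.eventually_le_atBot (-b)] with x hx
    simpa [hLdef] using neg_le_neg hx
  -- eventual bounds on D
  have hbounds : ∀ᶠ x in l, m * L x - K ≤ D x ∧ D x ≤ M * L x + K ∧ 1 < L x := by
    filter_upwards [hev] with x ⟨he1, he2, hd1, hd2, hc1, hc2, habs⟩
    have hLpos : 1 < L x := by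
      have := Real.log_lt_log he1 he2
      rw [Real.log_exp] at this
      simp only [hLdef]; linarith
    obtain ⟨h1, h2⟩ := abs_le.mp habs
    have hlogd : Real.log (d x) = -D x := by simp [hDdef]
    have hloge : Real.log (e x) = -L x := by simp [hLdef]
    rw [hlogd, hloge] at h1 h2
    refine ⟨?_, ?_, hLpos⟩
    · nlinarith
    · nlinarith
  have hD : Filter.Tendsto D l Filter.atTop := by
    refine Filter.tendsto_atTop_mono' l ?_
      ((Filter.tendsto_atTop_add_const_right l (-K) (hL.const_mul_atTop hm)))
    filter_upwards [hbounds] with x hx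
    simpa [sub_eq_add_neg] using hx.1
  -- d → 0
  have hd0 : Filter.Tendsto d l (nhds 0) := by
    have h1 : Filter.Tendsto (fun x => Real.exp (-D x)) l (nhds 0) := by
      apply Real.tendsto_exp_atBot.comp
      rw [Filter.tendsto_atBot]
      intro b
      filter_upwards [hD.eventually_ge_atTop (-b)] with x hx
      linarith
    refine h1.congr' ?_
    filter_upwards [hev] with x hx
    simp only [hDdef, neg_neg]
    exact Real.exp_log hx.2.2.1
  refine ⟨hd0, ?_⟩
  -- double logs
  set f : X → ℝ := fun x => Real.log (L x) with hfdef
  set g : X → ℝ := fun x => Real.log (D x) with hgdef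
  clear_value f g
  have hg : Filter.Tendsto g l Filter.atTop := by
    rw [hgdef]; exact Real.tendsto_log_atTop.comp hD
  have hMK : (0:ℝ) < M + K := by linarith
  set C : ℝ := max |Real.log (m / 2)| |Real.log (M + K)| with hCdef
  -- eventual bound |g - f| ≤ C
  have hgf : ∀ᶠ x in l, |g x - f x| ≤ C := by
    filter_upwards [hbounds, hL.eventually_ge_atTop (max 1 (2 * K / m))]
      with x ⟨hx1, hx2, hx3⟩ hx4
    simp only [hfdef, hgdef]
    have hL1 : (1:ℝ) ≤ L x := le_trans (le_max_left _ _) hx4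
    have hLK : 2 * K / m ≤ L x := le_trans (le_max_right _ _) hx4
    have hKL : 2 * K ≤ m * L x := by
      have := (div_le_iff₀ hm).mp hLK
      linarith [mul_comm (L x) m]
    have hlow : m / 2 * L x ≤ D x := by
      have : m / 2 * L x = m * L x / 2 := by ring
      linarith
    have hhigh : D x ≤ (M + K) * L x := by nlinarith
    have hp : 0 < m / 2 * L x := by positivity
    have h1 : Real.log (m / 2) + Real.log (L x) ≤ Real.log (D x) := by
      rw [← Real.log_mul (by positivity) (by linarith)]
      exact Real.log_le_log hp hlow
    have h2 : Real.log (D x) ≤ Real.log (M + K) + Real.log (L x) := by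
      rw [← Real.log_mul (ne_of_gt hMK) (by linarith)]
      exact Real.log_le_log (lt_of_lt_of_le hp hlow) hhigh
    rw [abs_le]
    constructor
    · have := neg_abs_le (Real.log (m / 2))
      have hC1 : |Real.log (m / 2)| ≤ C := le_max_left _ _
      linarith
    · have := le_abs_self (Real.log (M + K))
      have hC2 : |Real.log (M + K)| ≤ C := le_max_right _ _
      linarith
  -- (g - f) / g → 0
  have h0 : Filter.Tendsto (fun x => (g x - f x) / g x) l (nhds 0) := by
    apply squeeze_zero_norm' (a := fun x => C / g x)
    · filter_upwards [hgf, hg.eventually_ge_atTop 1] with x hx1 hx2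
      have hgpos : 0 < g x := by linarith
      rw [Real.norm_eq_abs, abs_div, abs_of_pos hgpos]
      exact div_le_div_of_nonneg_right hx1 hgpos.le
    · exact tendsto_const_nhds.div_atTop hg
  have hfinal : Filter.Tendsto (fun x => 1 - (g x - f x) / g x) l (nhds 1) := by
    have := (tendsto_const_nhds : Filter.Tendsto (fun _ : X => (1:ℝ)) l (nhds 1)).sub h0
    simpa using this
  refine hfinal.congr' ?_
  filter_upwards [hg.eventually_ge_atTop 1] with x hx
  have hgne : g x ≠ 0 := ne_of_gt (by linarith)
  have hfx : Real.log (-Real.log (e x)) = f x := by rw [hfdef, hLdef]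
  have hgx : Real.log (-Real.log (d x)) = g x := by rw [hgdef, hDdef]
  rw [hfx, hgx]
  field_simp
  ring
end
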